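/- arXiv:1410.7207 — 7 statements merged into one kernel-verified Lean document; each statement's English description precedes it below -/
import Mathlib

section
/- Assume q ≥ 3. Let C ⊆ F_q^n be a nonzero linear code of dimension t, and let 1 ≤ r ≤ t. Then the r-th generalized Hamming weight d_r(C) = min{|χ(D)| : D ⊆ C subspace with dim(D) = r} equals min{dim(A) : A an optimal linear anticode in F_q^n with dim(A ∩ C) ≥ r}, where χ(D) = {i : there exists d ∈ D with d_i ≠ 0} and an optimal linear anticode is a subspace A with dim(A) = maxwt(A). -/
/-- Hamming weight of a vector. -/
noncomputable def hwt {n : ℕ} {K : Type*} [Zero K] (v : Fin n → K) : ℕ := Set.ncard {i | v i ≠ 0}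

/-- Maximum Hamming weight of a linear code. -/
noncomputable def maxwt {n : ℕ} {K : Type*} [Field K] (C : Submodule K (Fin n → K)) : ℕ :=
  sSup {w | ∃ v ∈ C, hwt v = w}

/-- Support of a subspace D ⊆ F_q^n. -/
def codeSupp {n : ℕ} {K : Type*} [Field K] (D : Submodule K (Fin n → K)) : Set (Fin n) :=
  {i | ∃ d ∈ D, d i ≠ 0}

section Aux

open Module Set

variable {K : Type*} [Field K] [Fintype K] {n : ℕ}

lemma maxwt_bdd (A : Submodule K (Fin n → K)) : BddAbove {w | ∃ v ∈ A, hwt v = w} := by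
  refine ⟨n, ?_⟩
  rintro w ⟨v, -, rfl⟩
  have : {i | v i ≠ 0}.ncard ≤ (Set.univ : Set (Fin n)).ncard :=
    Set.ncard_le_ncard (Set.subset_univ _) Set.finite_univ
  simpa [hwt, Set.ncard_univ] using this

lemma le_maxwt {A : Submodule K (Fin n → K)} {v : Fin n → K} (hv : v ∈ A) :
    hwt v ≤ maxwt A := le_csSup (maxwt_bdd A) ⟨v, hv, rfl⟩

lemma exists_maxwt (A : Submodule K (Fin n → K)) : ∃ v ∈ A, hwt v = maxwt A := by
  have hne : Set.Nonempty {w | ∃ v ∈ A, hwt v = w} := ⟨hwt (0 : Fin n → K), 0, A.zero_mem, rfl⟩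
  exact Nat.sSup_mem hne (maxwt_bdd A)

/-- Coordinate subspace supported on `S`. -/
noncomputable def stdA (K : Type*) [Field K] {n : ℕ} (S : Set (Fin n)) :
    Submodule K (Fin n → K) :=
  LinearMap.ker (LinearMap.funLeft K K ((↑) : ↥(Sᶜ) → Fin n))

lemma mem_stdA {S : Set (Fin n)} {v : Fin n → K} :
    v ∈ stdA K S ↔ ∀ i ∉ S, v i = 0 := by
  simp only [stdA, LinearMap.mem_ker, LinearMap.funLeft_apply]
  constructor
  · intro h i hi
    exact congrFun h ⟨i, hi⟩
  · intro h
    funext j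
    exact h j.1 j.2

lemma finrank_stdA (S : Set (Fin n)) : finrank K (stdA K S) = S.ncard := by
  classical
  have hsurj : Function.Surjective (LinearMap.funLeft K K ((↑) : ↥(Sᶜ) → Fin n)) :=
    LinearMap.funLeft_surjective_of_injective K K _ Subtype.val_injective
  have h1 := LinearMap.finrank_range_add_finrank_ker
    (LinearMap.funLeft K K ((↑) : ↥(Sᶜ) → Fin n))
  rw [LinearMap.range_eq_top.2 hsurj, finrank_top] at h1
  have h2 : finrank K (↥(Sᶜ) → K) = (Sᶜ).ncard := by
    rw [Module.finrank_pi, ← Nat.card_coe_set_eq, Nat.card_eq_fintype_card]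
  have h3 : S.ncard + (Sᶜ).ncard = n := by
    have := Set.ncard_add_ncard_compl S
    simpa [Nat.card_eq_fintype_card] using this
  have h4 : finrank K (Fin n → K) = n := by simp
  rw [h2, h4] at h1
  unfold stdA
  omega

lemma maxwt_stdA (S : Set (Fin n)) : maxwt (stdA K S) = S.ncard := by
  classical
  apply le_antisymm
  · refine csSup_le ⟨0, 0, Submodule.zero_mem _, by simp [hwt]⟩ ?_
    rintro w ⟨v, hv, rfl⟩
    apply Set.ncard_le_ncard _ S.toFinite
    intro i hi
    by_contra h
    exact hi (mem_stdA.1 hv i h)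
  · apply le_csSup (maxwt_bdd _)
    refine ⟨fun i => if i ∈ S then (1 : K) else 0, ?_, ?_⟩
    · rw [mem_stdA]
      intro i hi
      simp [hi]
    · unfold hwt
      congr 1
      ext i
      simp
set_option maxHeartbeats 1000000 in
set_option synthInstance.maxHeartbeats 200000 in
lemma exists_le_finrank (V : Submodule K (Fin n → K)) (r : ℕ) (hr : r ≤ finrank K V) :
    ∃ D : Submodule K (Fin n → K), D ≤ V ∧ finrank K D = r := by
  obtain ⟨s, hcard, hli⟩ := exists_finset_linearIndependent_of_le_finrank hr
  refine ⟨(Submodule.span K (s : Set ↥V)).map V.subtype, Submodule.map_subtype_le _ _, ?_⟩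
  have hEq : finrank K (Submodule.span K (s : Set ↥V)) =
      finrank K ((Submodule.span K (s : Set ↥V)).map V.subtype) :=
    LinearEquiv.finrank_eq (Submodule.equivMapOfInjective V.subtype V.injective_subtype _)
  rw [← hEq, finrank_span_finset_eq_card hli, hcard]

lemma codeSupp_ncard_le_of_optimal (hq : 3 ≤ Fintype.card K) (A : Submodule K (Fin n → K))
    (hA : finrank K A = maxwt A) : (codeSupp A).ncard ≤ finrank K A := by
  classical
  obtain ⟨v, hvA, hv⟩ := exists_maxwt A
  set S : Set (Fin n) := {i | v i ≠ 0} with hSdef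
  have hScard : S.ncard = maxwt A := hv
  suffices hsub : codeSupp A ⊆ S by
    calc (codeSupp A).ncard ≤ S.ncard := Set.ncard_le_ncard hsub S.toFinite
    _ = finrank K A := by rw [hScard, hA]
  intro i hi
  by_contra hiS
  obtain ⟨u, huA, hui⟩ := hi
  set π : A →ₗ[K] (↥S → K) := (LinearMap.funLeft K K ((↑) : ↥S → Fin n)).comp A.subtype with hπ
  have hπapp : ∀ (a : A) (j : ↥S), π a j = (a : Fin n → K) j := fun a j => rfl
  -- injectivity of restriction to S
  have hker : ∀ a : A, π a = 0 → a = 0 := by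
    intro a ha
    by_contra ha0
    have ha1 : (a : Fin n → K) ≠ 0 := fun h => ha0 (Subtype.ext h)
    have hdisjS : ∀ j ∈ S, (a : Fin n → K) j = 0 := by
      intro j hj
      have := congrFun ha ⟨j, hj⟩
      simpa [hπapp] using this
    set T : Set (Fin n) := {j | (a : Fin n → K) j ≠ 0} with hT
    have hTne : T.Nonempty := by
      rcases Function.ne_iff.1 ha1 with ⟨j, hj⟩
      exact ⟨j, by simpa [hT] using hj⟩
    have hST : Disjoint S T := by
      rw [Set.disjoint_left]
      intro j hjS hjT
      exact hjT (hdisjS j hjS)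
    have hw : v + (a : Fin n → K) ∈ A := A.add_mem hvA a.2
    have hsup : S ∪ T ⊆ {j | (v + (a : Fin n → K)) j ≠ 0} := by
      intro j hj
      rcases hj with hj | hj
      · have h0 : (a : Fin n → K) j = 0 := hdisjS j hj
        have : v j ≠ 0 := hj
        simp [h0, this]
      · have hvj : v j = 0 := by
          by_contra h
          exact (Set.disjoint_left.1 hST h) hj
        have : (a : Fin n → K) j ≠ 0 := hj
        simp [hvj, this]
    have hle := le_maxwt hw
    have hcount : S.ncard + T.ncard ≤ hwt (v + (a : Fin n → K)) := by
      rw [← Set.ncard_union_eq hST S.toFinite T.toFinite]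
      exact Set.ncard_le_ncard hsup (Set.toFinite _)
    have hT1 : 0 < T.ncard := by
      rw [Set.ncard_pos T.toFinite]
      exact hTne
    omega
  have hinj : Function.Injective π := by
    rw [← LinearMap.ker_eq_bot]
    exact (Submodule.eq_bot_iff _).2 fun a ha => hker a ha
  have hdim : finrank K A = finrank K (↥S → K) := by
    rw [Module.finrank_pi, hA, ← hScard, ← Nat.card_coe_set_eq, Nat.card_eq_fintype_card]
  have hsurj : Function.Surjective π :=
    (LinearMap.injective_iff_surjective_of_finrank_eq_finrank hdim).1 hinj
  let e : A ≃ₗ[K] (↥S → K) := LinearEquiv.ofBijective π ⟨hinj, hsurj⟩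
  let f : (↥S → K) →ₗ[K] K :=
    ((LinearMap.proj i).comp A.subtype).comp (e.symm : (↥S → K) →ₗ[K] A)
  have hfdef : ∀ t : ↥S → K, f t = ((e.symm t : A) : Fin n → K) i := fun t => rfl
  have hfu : f (π ⟨u, huA⟩) ≠ 0 := by
    have h1 : e.symm (π ⟨u, huA⟩) = ⟨u, huA⟩ := e.symm_apply_apply _
    rw [hfdef, h1]
    exact hui
  have hm : ∃ m : ↥S, f (Pi.single m (1 : K)) ≠ 0 := by
    by_contra h
    push_neg at h
    apply hfu
    have hconv : ∀ m : ↥S, (fun j => if m = j then (1 : K) else 0) = Pi.single m (1 : K) := by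
      intro m
      funext j
      simp [Pi.single_apply, eq_comm]
    have hrep := pi_eq_sum_univ (π ⟨u, huA⟩)
    rw [hrep, map_sum]
    simp [hconv, h]
  obtain ⟨m, hmne⟩ := hm
  set sing : ↥S → K := Pi.single m (1 : K) with hsing
  obtain ⟨y, hy0, hy1⟩ : ∃ y : K, y ≠ 0 ∧ y ≠ 1 := by
    by_contra h
    push_neg at h
    have hs : (Finset.univ : Finset K) ⊆ {0, 1} := by
      intro z _
      rcases eq_or_ne z 0 with rfl | hz
      · simp
      · simp [h z hz]
    have := Finset.card_le_card hs
    have h2 : ({0, 1} : Finset K).card ≤ 2 := Finset.card_insert_le _ _ |>.trans (by simp)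
    rw [Finset.card_univ] at this
    omega
  set tvec : K → (↥S → K) := fun x => fun j => if j = m then x else 1 with htvec
  have htf : ∀ x : K, f (tvec x) = f (tvec 1) + (x - 1) * f sing := by
    intro x
    have hdecomp : tvec x = tvec 1 + (x - 1) • sing := by
      funext j
      by_cases hj : j = m
      · subst hj
        simp [htvec, hsing]
      · simp [htvec, hsing, hj, Pi.single_eq_of_ne hj]
    rw [hdecomp, map_add, map_smul, smul_eq_mul]
  have hex : ∃ x : K, x ≠ 0 ∧ f (tvec x) ≠ 0 := by
    by_cases h1 : f (tvec 1) = 0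
    · refine ⟨y, hy0, ?_⟩
      rw [htf y, h1, zero_add]
      exact mul_ne_zero (sub_ne_zero.2 hy1) hmne
    · exact ⟨1, one_ne_zero, h1⟩
  obtain ⟨x, hx0, hfx⟩ := hex
  set a : A := e.symm (tvec x) with ha
  have hπa : π a = tvec x := by
    have : e a = tvec x := e.apply_symm_apply _
    exact this
  have hsupA : insert i S ⊆ {j | (a : Fin n → K) j ≠ 0} := by
    intro j hj
    rcases Set.mem_insert_iff.1 hj with rfl | hjS
    · show (a : Fin n → K) j ≠ 0
      have heq : f (tvec x) = (a : Fin n → K) j := rfl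
      rwa [heq] at hfx
    · show (a : Fin n → K) j ≠ 0
      have h1 := congrFun hπa ⟨j, hjS⟩
      rw [hπapp] at h1
      rw [h1]
      by_cases hjm : (⟨j, hjS⟩ : ↥S) = m
      · simp [htvec, hjm, hx0]
      · simp [htvec, hjm]
  have hbig : maxwt A + 1 ≤ hwt (a : Fin n → K) := by
    have h1 : (insert i S).ncard = S.ncard + 1 := Set.ncard_insert_of_notMem hiS S.toFinite
    calc maxwt A + 1 = (insert i S).ncard := by rw [h1, hScard]
    _ ≤ hwt (a : Fin n → K) := Set.ncard_le_ncard hsupA (Set.toFinite _)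
  have := le_maxwt a.2
  omega

end Aux

/-- for q ≥ 3 and a nonzero code C of dimension t, for 1 ≤ r ≤ t,
the r-th generalized Hamming weight equals the minimum dimension of an optimal
linear anticode A with dim(A ⊓ C) ≥ r. -/
theorem stmt3 {K : Type*} [Field K] [Fintype K] (hq : 3 ≤ Fintype.card K) {n : ℕ}
    (C : Submodule K (Fin n → K)) (hC : C ≠ ⊥)
    (r : ℕ) (hr1 : 1 ≤ r) (hr2 : r ≤ Module.finrank K C) :
    sInf {c : ℕ | ∃ D : Submodule K (Fin n → K),
        D ≤ C ∧ Module.finrank K D = r ∧ (codeSupp D).ncard = c} =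
    sInf {d : ℕ | ∃ A : Submodule K (Fin n → K),
        Module.finrank K A = maxwt A ∧ r ≤ Module.finrank K ↥(A ⊓ C) ∧
        Module.finrank K A = d} := by
  classical
  set s1 := {c : ℕ | ∃ D : Submodule K (Fin n → K),
      D ≤ C ∧ Module.finrank K D = r ∧ (codeSupp D).ncard = c} with hs1
  set s2 := {d : ℕ | ∃ A : Submodule K (Fin n → K),
      Module.finrank K A = maxwt A ∧ r ≤ Module.finrank K ↥(A ⊓ C) ∧
      Module.finrank K A = d} with hs2
  have h12 : s1 ⊆ s2 := by
    rintro c ⟨D, hDC, hDr, hDc⟩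
    refine ⟨stdA K (codeSupp D), ?_, ?_, ?_⟩
    · rw [finrank_stdA, maxwt_stdA]
    · have hDle : D ≤ stdA K (codeSupp D) ⊓ C := by
        refine le_inf ?_ hDC
        intro d hd
        rw [mem_stdA]
        intro j hj
        by_contra h
        exact hj ⟨d, hd, h⟩
      calc r = Module.finrank K D := hDr.symm
      _ ≤ Module.finrank K ↥(stdA K (codeSupp D) ⊓ C) := Submodule.finrank_mono hDle
    · rw [finrank_stdA, hDc]
  have hne1 : s1.Nonempty := by
    obtain ⟨D, hDC, hDr⟩ := exists_le_finrank C r hr2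
    exact ⟨(codeSupp D).ncard, D, hDC, hDr, rfl⟩
  have hne2 : s2.Nonempty := hne1.mono h12
  apply le_antisymm
  · apply le_csInf hne2
    rintro d ⟨A, hAopt, hAr, rfl⟩
    obtain ⟨D0, hD0, hD0r⟩ := exists_le_finrank (A ⊓ C) r hAr
    have hc : (codeSupp D0).ncard ≤ Module.finrank K A := by
      refine le_trans (Set.ncard_le_ncard ?_ (Set.toFinite _))
        (codeSupp_ncard_le_of_optimal hq A hAopt)
      rintro j ⟨dd, hdd, hj⟩
      exact ⟨dd, (hD0 hdd).1, hj⟩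
    exact le_trans (Nat.sInf_le ⟨D0, le_trans hD0 inf_le_right, hD0r, rfl⟩) hc
  · exact Nat.sInf_le (h12 (Nat.sInf_mem hne1))
end

section
/- There exists a 2-dimensional linear code C ⊆ F_2^3 (namely the span of (1,0,1) and (0,1,1)) such that dim(C) = maxwt(C) = 2 but C is not of the form C_2(3,S) for any subset S of size 2; in particular the characterization of optimal anticodes as free codes fails for q = 2. -/
/-- The free code supported by S: vectors vanishing outside S. -/
def freeCode (K : Type*) [Field K] (n : ℕ) (S : Finset (Fin n)) : Submodule K (Fin n → K) where
  carrier := {v | ∀ i ∉ S, v i = 0}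
  add_mem' := fun {a b} ha hb i hi => by simp [ha i hi, hb i hi]
  zero_mem' := fun i _ => rfl
  smul_mem' := fun c v hv i hi => by simp [hv i hi]

lemma hwt_concrete (v : Fin 3 → ZMod 2) :
    hwt v = ((Finset.univ.filter (fun i => v i ≠ 0)) : Finset (Fin 3)).card := by
  rw [hwt, ← Set.ncard_coe_finset]
  congr 1
  ext i; simp

lemma mem_span_cases (v : Fin 3 → ZMod 2)
    (hv : v ∈ Submodule.span (ZMod 2) {![1,0,1], ![0,1,1]}) :
    v = 0 ∨ v = ![1,0,1] ∨ v = ![0,1,1] ∨ v = ![1,1,0] := by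
  rw [Submodule.mem_span_pair] at hv
  obtain ⟨c, d, h⟩ := hv
  have h2 : ∀ x : ZMod 2, x = 0 ∨ x = 1 := by decide
  have hc := h2 c
  have hd := h2 d
  rcases hc with rfl | rfl <;> rcases hd with rfl | rfl <;> subst h
  · left; simp
  · right; right; left; simp
  · right; left; simp
  · right; right; right
    funext i; fin_cases i <;> simp <;> decide

lemma hwt_a : hwt (![1,0,1] : Fin 3 → ZMod 2) = 2 := by rw [hwt_concrete]; decide
lemma hwt_b : hwt (![0,1,1] : Fin 3 → ZMod 2) = 2 := by rw [hwt_concrete]; decide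
lemma hwt_c : hwt (![1,1,0] : Fin 3 → ZMod 2) = 2 := by rw [hwt_concrete]; decide
lemma hwt_z : hwt (0 : Fin 3 → ZMod 2) = 2 ∨ hwt (0 : Fin 3 → ZMod 2) = 0 := by
  right; rw [hwt_concrete]; decide

/-- over F_2 the span of (1,0,1) and (0,1,1) in F_2^3 is a
2-dimensional optimal linear anticode which is not a free code on a 2-element
support, so the characterization of optimal anticodes as free codes fails for q = 2. -/
theorem stmt4 :
    ∃ C : Submodule (ZMod 2) (Fin 3 → ZMod 2),
      C = Submodule.span (ZMod 2) {![1,0,1], ![0,1,1]} ∧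
      Module.finrank (ZMod 2) C = 2 ∧ maxwt C = 2 ∧
      ¬ ∃ S : Finset (Fin 3), S.card = 2 ∧ C = freeCode (ZMod 2) 3 S := by
  refine ⟨Submodule.span (ZMod 2) {![1,0,1], ![0,1,1]}, rfl, ?_, ?_, ?_⟩
  · have hli : LinearIndependent (ZMod 2) ![(![1,0,1] : Fin 3 → ZMod 2), ![0,1,1]] := by
      rw [LinearIndependent.pair_iff]
      intro s t h
      have h2 : ∀ x : ZMod 2, x = 0 ∨ x = 1 := by decide
      rcases h2 s with rfl | rfl <;> rcases h2 t with rfl | rfl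
      · exact ⟨rfl, rfl⟩
      · exfalso; have := congrFun h 1; simp at this
      · exfalso; have := congrFun h 0; simp at this
      · exfalso; have := congrFun h 0; simp at this
    have : Submodule.span (ZMod 2) {![1,0,1], ![0,1,1]} =
        Submodule.span (ZMod 2) (Set.range ![(![1,0,1] : Fin 3 → ZMod 2), ![0,1,1]]) := by
      congr 1
      simp [Set.range, Matrix.range_cons]
      ext v; constructor
      · rintro (rfl | rfl)
        · exact Or.inl rfl
        · exact Or.inr rfl
      · intro h; rcases h with rfl | rfl <;> simp
    rw [this, finrank_span_eq_card hli]
    simp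
  · have hmem : (![1,0,1] : Fin 3 → ZMod 2) ∈ Submodule.span (ZMod 2) {![1,0,1], ![0,1,1]} :=
      Submodule.subset_span (by simp)
    have hub : ∀ w ∈ {w : ℕ | ∃ v ∈ Submodule.span (ZMod 2) ({![1,0,1], ![0,1,1]} : Set (Fin 3 → ZMod 2)), hwt v = w}, w ≤ 2 := by
      rintro w ⟨v, hv, rfl⟩
      rcases mem_span_cases v hv with rfl | rfl | rfl | rfl
      · rcases hwt_z with h | h <;> omega
      · exact hwt_a.le
      · exact hwt_b.le
      · exact hwt_c.le
    exact le_antisymm (csSup_le ⟨2, ![1,0,1], hmem, hwt_a⟩ hub)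
      (le_csSup ⟨2, hub⟩ ⟨![1,0,1], hmem, hwt_a⟩)
  · rintro ⟨S, hS, hC⟩
    have ha : (![1,0,1] : Fin 3 → ZMod 2) ∈ freeCode (ZMod 2) 3 S := by
      rw [← hC]; exact Submodule.subset_span (by simp)
    have hb : (![0,1,1] : Fin 3 → ZMod 2) ∈ freeCode (ZMod 2) 3 S := by
      rw [← hC]; exact Submodule.subset_span (by simp)
    have h0 : (0 : Fin 3) ∈ S := by
      by_contra h; have := ha 0 h; simp at this
    have h1 : (1 : Fin 3) ∈ S := by
      by_contra h; have := hb 1 h; simp at this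
    have h2 : (2 : Fin 3) ∈ S := by
      by_contra h; have := ha 2 h; simp at this
    have : ({0,1,2} : Finset (Fin 3)) ⊆ S := by
      intro i hi; fin_cases hi <;> assumption
    have := Finset.card_le_card this
    simp at this; omega
end

section
/- Let 1 ≤ k ≤ m be integers and let C ⊆ F_{q^m}^k be an F_{q^m}-subspace (a Gabidulin code). Then dim_{F_{q^m}}(C) ≤ maxrk(C), where the rank of a vector v ∈ F_{q^m}^k is the dimension over F_q of the F_q-span of its components v_1, ..., v_k, and maxrk(C) = max{rk(c) : c ∈ C}. -/
/-- Rank of a vector v ∈ L^k over the base field K: the K-dimension of the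
K-span of its components. -/
noncomputable def vrk (K : Type*) {L : Type*} [Field K] [Field L] [Algebra K L]
    {k : ℕ} (v : Fin k → L) : ℕ :=
  Module.finrank K (Submodule.span K (Set.range v))

/-- Maximum rank of a Gabidulin code. -/
noncomputable def maxrk (K : Type*) {L : Type*} [Field K] [Field L] [Algebra K L]
    {k : ℕ} (C : Submodule L (Fin k → L)) : ℕ :=
  sSup {r | ∃ v ∈ C, vrk K v = r}

open Matrix

lemma vrk_le_k {K L : Type*} [Field K] [Field L] [Algebra K L]
    {k : ℕ} (v : Fin k → L) : vrk K v ≤ k := by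
  classical
  have h := finrank_range_le_card (R := K) v
  simpa [vrk, Set.finrank] using h

/-- for 1 ≤ k ≤ m and a Gabidulin code C ⊆ F_{q^m}^k,
dim_{F_{q^m}} C ≤ maxrk C. -/
theorem stmt5 {K L : Type*} [Field K] [Field L] [Algebra K L] [Fintype K] {k m : ℕ}
    (hk : 1 ≤ k) (hkm : k ≤ m) (hm : Module.finrank K L = m)
    (C : Submodule L (Fin k → L)) :
    Module.finrank L C ≤ maxrk K C := by
  classical
  have hFD : FiniteDimensional K L :=
    Module.finite_of_finrank_pos (by omega : 0 < Module.finrank K L)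
  set d := Module.finrank L C with hd
  have hdk : d ≤ k := by
    have h1 := Submodule.finrank_le C
    have h2 : Module.finrank L (Fin k → L) = k := by simp
    omega
  have hdm : d ≤ m := hdk.trans hkm
  let b : Module.Basis (Fin d) L C := Module.finBasisOfFinrankEq L C hd.symm
  let M : Matrix (Fin d) (Fin k) L := Matrix.of fun i j => (b i : Fin k → L) j
  have hrows : LinearIndependent L (fun i => M i) :=
    b.linearIndependent.map' C.subtype C.ker_subtype
  have hrank : M.rank = d := by
    rw [Matrix.rank_eq_finrank_span_row, Matrix.row]
    simpa using finrank_span_eq_card hrows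
  have hspanT : Module.finrank L (Submodule.span L (Set.range Mᵀ)) = d := by
    rw [show Set.range Mᵀ = Set.range Mᵀ.row from rfl, ← Matrix.rank_eq_finrank_span_row, Matrix.rank_transpose, hrank]
  obtain ⟨t, hts, htspan, htli⟩ := exists_linearIndependent L (Set.range Mᵀ)
  have htfin : t.Finite := (Set.finite_range Mᵀ).subset hts
  letI : Fintype t := htfin.fintype
  have hcard : Fintype.card t = d := by
    have h1 := finrank_span_set_eq_card htli
    rw [htspan, hspanT] at h1
    rw [← Set.toFinset_card]
    omega
  let e : Fin d ≃ t := (Fintype.equivFinOfCardEq hcard).symm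
  have hφ : ∀ r : Fin d, ∃ j : Fin k, Mᵀ j = (e r : Fin d → L) := fun r => hts (e r).2
  choose φ hφ' using hφ
  let N : Matrix (Fin d) (Fin d) L := Matrix.of fun i r => M i (φ r)
  have hNcols : LinearIndependent L (fun r => Nᵀ r) := by
    have hEq : (fun r => Nᵀ r) = fun r => ((e r : Fin d → L)) := funext fun r => hφ' r
    rw [hEq]
    exact htli.comp (fun r => e r) e.injective
  have hNunit : IsUnit N := Matrix.linearIndependent_cols_iff_isUnit.mp hNcols
  have hsurj : Function.Surjective N.vecMul := Matrix.vecMul_surjective_iff_isUnit.mpr hNunit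
  let bKL : Module.Basis (Fin m) K L := Module.finBasisOfFinrankEq K L hm
  let v : Fin d → L := fun r => bKL (Fin.castLE hdm r)
  obtain ⟨x, hx⟩ := hsurj v
  let c : Fin k → L := fun j => ∑ i, x i * M i j
  have hcC : c ∈ C := by
    have hEq : c = ((∑ i, x i • b i : C) : Fin k → L) := by
      funext j
      simp [c, M, Submodule.coe_sum]
    rw [hEq]
    exact Submodule.coe_mem _
  have hc : ∀ r, c (φ r) = v r := by
    intro r
    have h1 : x ᵥ* N = v := hx
    have h2 := congrFun h1 r
    simpa [Matrix.vecMul, dotProduct, N, c] using h2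
  have hvli : LinearIndependent K v :=
    bKL.linearIndependent.comp _ (Fin.castLE_injective hdm)
  have hli2 : LinearIndependent K (fun r => c (φ r)) := by
    have : (fun r => c (φ r)) = v := funext hc
    rw [this]; exact hvli
  have hvrk : d ≤ vrk K c := by
    let W := Submodule.span K (Set.range c)
    let w : Fin d → W := fun r => ⟨c (φ r), Submodule.subset_span ⟨φ r, rfl⟩⟩
    have hwli : LinearIndependent K w := by
      apply LinearIndependent.of_comp W.subtype
      exact hli2
    have := hwli.fintype_card_le_finrank
    simpa [vrk, W] using this
  have hbdd : BddAbove {r | ∃ v ∈ C, vrk K v = r} := by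
    refine ⟨k, ?_⟩
    rintro r ⟨w, _, rfl⟩
    exact vrk_le_k w
  exact hvrk.trans (le_csSup hbdd ⟨c, hcC, rfl⟩)
end

section
/- Let H ⊆ F_{q^m} be an F_q-subspace of dimension h over F_q with 1 ≤ h ≤ m − 2, let x ∈ F_{q^m} \ H, and let y ∈ F_{q^m}. Then there exists α ∈ F_{q^m} \ H such that x + αy ∉ H ⊕ ⟨α⟩, where ⟨α⟩ denotes the F_q-span of α. -/
/-- if H ⊆ F_{q^m} is an F_q-subspace of dimension h with
1 ≤ h ≤ m − 2, x ∉ H and y ∈ F_{q^m}, then there is α ∉ H with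
x + αy ∉ H + ⟨α⟩. -/
theorem stmt6 {K L : Type*} [Field K] [Field L] [Algebra K L] [Fintype K] {m h : ℕ}
    (hm : Module.finrank K L = m)
    (H : Submodule K L) (hH : Module.finrank K H = h) (h1 : 1 ≤ h) (h2 : h ≤ m - 2)
    (x : L) (hx : x ∉ H) (y : L) :
    ∃ α : L, α ∉ H ∧ x + α * y ∉ H ⊔ Submodule.span K {α} := by
  by_contra hcon
  push_neg at hcon
  have hm2 : h + 2 ≤ m := by omega
  have hfd : FiniteDimensional K L := FiniteDimensional.of_finrank_pos (by rw [hm]; omega)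
  have hfin : Finite L := Module.finite_of_finite K
  cases nonempty_fintype L
  set q := Fintype.card K with hq
  have hq2 : 2 ≤ q := Fintype.one_lt_card
  let g : H × K → L := fun p => (x - p.1) * ((algebraMap K L p.2) - y)⁻¹
  have hcover : (Set.univ : Set L) ⊆ ↑H ∪ Set.range g := by
    intro α _
    by_cases hα : α ∈ H
    · exact Or.inl hα
    · right
      obtain ⟨p, hp, c, hc, hpc⟩ := Submodule.mem_sup.mp (hcon α hα)
      obtain ⟨k, hk⟩ := Submodule.mem_span_singleton.mp hc
      have heq : x - p = α * (algebraMap K L k - y) := by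
        have hk' : algebraMap K L k * α = c := by rw [← hk, Algebra.smul_def]
        have : x + α * y = p + algebraMap K L k * α := by rw [hk']; exact hpc.symm
        ring_nf
        ring_nf at this
        linear_combination this
      have hne : algebraMap K L k - y ≠ 0 := by
        intro h0
        rw [h0, mul_zero, sub_eq_zero] at heq
        exact hx (heq ▸ hp)
      refine ⟨(⟨p, hp⟩, k), ?_⟩
      show (x - p) * (algebraMap K L k - y)⁻¹ = α
      rw [heq, mul_assoc, mul_inv_cancel₀ hne, mul_one]
  haveI : Fintype H := Fintype.ofFinite H
  have hHcard : Nat.card H = q ^ h := by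
    rw [Nat.card_eq_fintype_card, Module.card_eq_pow_finrank (K := K), hH]
  have hLcard : Nat.card L = q ^ m := by
    rw [Nat.card_eq_fintype_card, Module.card_eq_pow_finrank (K := K), hm]
  have hcount : Nat.card L ≤ Nat.card H + Nat.card H * q := by
    calc Nat.card L = (Set.univ : Set L).ncard := (Set.ncard_univ L).symm
    _ ≤ ((↑H : Set L) ∪ Set.range g).ncard := Set.ncard_le_ncard hcover (Set.toFinite _)
    _ ≤ (↑H : Set L).ncard + (Set.range g).ncard := Set.ncard_union_le _ _
    _ ≤ Nat.card H + Nat.card (H × K) := by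
        gcongr
        · rw [← Nat.card_coe_set_eq]; rfl
        · rw [← Nat.card_coe_set_eq]
          exact Finite.card_range_le g
    _ = Nat.card H + Nat.card H * q := by rw [Nat.card_prod, Nat.card_eq_fintype_card (α := K)]
  rw [hHcard, hLcard] at hcount
  have hlt : q ^ h + q ^ h * q < q ^ (h + 2) := by
    have : q ^ (h + 2) = q ^ h * (q * q) := by ring
    rw [this]
    have h1q : 1 + q < q * q := by nlinarith
    calc q ^ h + q ^ h * q = q ^ h * (1 + q) := by ring
    _ < q ^ h * (q * q) := by
        have hp : 0 < q ^ h := Nat.pow_pos (by omega)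
        exact mul_lt_mul_of_pos_left h1q hp
  have hle : q ^ (h + 2) ≤ q ^ m := Nat.pow_le_pow_right (by omega) hm2
  omega
end

section
/- Let 1 ≤ k ≤ m. An F_{q^m}-subspace V ⊆ F_{q^m}^k is Frobenius-closed (i.e., closed under the componentwise q-th power map) if and only if V is an optimal Gabidulin anticode, i.e., dim_{F_{q^m}}(V) = maxrk(V), where rk(v) = dim_{F_q} Span_{F_q}{v_1,...,v_k} and maxrk(V) = max{rk(v) : v ∈ V}. -/
open Module Submodule Polynomial Finset

/-- V is Frobenius-closed if stable under the componentwise q-power map. -/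
def FrobClosed (K : Type*) {L : Type*} [Field K] [Fintype K] [Field L] [Algebra K L]
    {k : ℕ} (V : Submodule L (Fin k → L)) : Prop :=
  ∀ v ∈ V, (fun i => v i ^ Fintype.card K) ∈ V

section aux
variable {K L : Type*} [Field K] [Field L] [Algebra K L]

lemma vrk_le {k : ℕ} (v : Fin k → L) : vrk K v ≤ k := by
  classical
  have h1 : Module.finrank K (Submodule.span K (Set.range v)) ≤ (Set.range v).toFinset.card :=
    finrank_span_le_card (Set.range v)
  have h2 : (Set.range v).toFinset.card ≤ k := by
    rw [Set.toFinset_card]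
    simpa using Fintype.card_range_le v
  exact h1.trans h2

lemma maxrk_bddAbove {k : ℕ} (V : Submodule L (Fin k → L)) :
    BddAbove {r | ∃ v ∈ V, vrk K v = r} :=
  ⟨k, fun r ⟨v, _, h⟩ => h ▸ vrk_le v⟩

lemma vrk_zero {k : ℕ} : vrk K (0 : Fin k → L) = 0 := by
  have : Submodule.span K (Set.range (0 : Fin k → L)) = ⊥ := by
    rw [Submodule.span_eq_bot]
    rintro x ⟨i, rfl⟩; rfl
  rw [vrk, this, finrank_bot]

lemma maxrk_nonempty {k : ℕ} (V : Submodule L (Fin k → L)) :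
    Set.Nonempty {r | ∃ v ∈ V, vrk K v = r} :=
  ⟨0, ⟨0, V.zero_mem, vrk_zero⟩⟩

end aux

section B
variable {K L : Type*} [Field K] [Field L] [Algebra K L] [FiniteDimensional K L]

/-- anticode bound core: exists a vector of rank ≥ dim V -/
lemma exists_vrk_ge {k : ℕ} (hdm : Module.finrank L (⊤ : Submodule L (Fin k → L)) ≤ Module.finrank K L)
    (V : Submodule L (Fin k → L)) :
    ∃ v ∈ V, Module.finrank L V ≤ vrk K v := by
  classical
  set d := Module.finrank L V with hd
  -- coordinate functionals
  set f : Fin k → Module.Dual L V := fun i => (LinearMap.proj i).comp V.subtype with hf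
  have hspan : Submodule.span L (Set.range f) = ⊤ := by
    set W := Submodule.span L (Set.range f)
    have hco : W.dualCoannihilator = ⊥ := by
      rw [eq_bot_iff]
      rintro v hv
      rw [Submodule.mem_dualCoannihilator] at hv
      have : (v : Fin k → L) = 0 := by
        funext i
        exact hv (f i) (Submodule.subset_span (Set.mem_range_self i))
      exact (Submodule.mem_bot _).2 (Subtype.ext this)
    have := Subspace.finrank_add_finrank_dualCoannihilator_eq W
    rw [hco, finrank_bot, add_zero] at this
    exact Submodule.eq_top_of_finrank_eq (by rw [this, Subspace.dual_finrank_eq])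
  obtain ⟨t, hts, hsp, hli⟩ := exists_linearIndependent L (Set.range f)
  have htfin : t.Finite := (Set.finite_range f).subset hts
  haveI : Fintype t := htfin.fintype
  have hbas : Nonempty (Basis t L (Module.Dual L V)) := by
    refine ⟨Basis.mk hli ?_⟩
    rw [Subtype.range_coe, hsp, hspan]
  obtain ⟨bas⟩ := hbas
  have htc : Fintype.card t = d := by
    rw [← finrank_eq_card_basis bas, Subspace.dual_finrank_eq]
  -- the projection onto the chosen coordinates
  set P : V →ₗ[L] (t → L) := LinearMap.pi (fun φ => (φ : Module.Dual L V)) with hP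
  have hPinj : Function.Injective P := by
    rw [← LinearMap.ker_eq_bot, eq_bot_iff]
    rintro v hv
    rw [LinearMap.mem_ker] at hv
    have hvan : ∀ ψ : Module.Dual L V, ψ v = 0 := by
      intro ψ
      have hψ : ψ ∈ Submodule.span L t := by rw [hsp, hspan]; trivial
      induction hψ using Submodule.span_induction with
      | mem x hx => exact congrFun hv ⟨x, hx⟩
      | zero => simp
      | add x y _ _ hx hy => simp [hx, hy]
      | smul c x _ hx => simp [hx]
    exact (Submodule.mem_bot _).2 ((Module.forall_dual_apply_eq_zero_iff L v).1 hvan)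
  have hPsurj : Function.Surjective P := by
    rw [← LinearMap.range_eq_top]
    apply Submodule.eq_top_of_finrank_eq
    rw [LinearMap.finrank_range_of_inj hPinj, Module.finrank_pi, htc]
  -- independent scalars
  have hdm' : d ≤ Module.finrank K L := by
    refine le_trans ?_ hdm
    rw [finrank_top]
    exact Submodule.finrank_le V
  set bL := Module.finBasis K L with hbL
  set j : t → Fin (Module.finrank K L) := fun φ =>
    Fin.castLE (htc ▸ hdm') (Fintype.equivFin t φ) with hj
  have hjinj : Function.Injective j := by
    intro a b hab
    exact (Fintype.equivFin t).injective (Fin.castLE_injective _ hab)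
  set α : t → L := fun φ => bL (j φ) with hα
  have hαli : LinearIndependent K α := bL.linearIndependent.comp j hjinj
  obtain ⟨v, hv⟩ := hPsurj α
  refine ⟨(v : Fin k → L), v.2, ?_⟩
  have hsub : Set.range α ⊆ Set.range (v : Fin k → L) := by
    rintro x ⟨φ, rfl⟩
    obtain ⟨i, hi⟩ := hts φ.2
    have : α φ = (φ : Module.Dual L V) v := by rw [← hv]; rfl
    rw [this, ← hi]
    exact ⟨i, rfl⟩
  calc d = Fintype.card t := htc.symm
    _ = Module.finrank K (Submodule.span K (Set.range α)) := (finrank_span_eq_card hαli).symm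
    _ ≤ vrk K (v : Fin k → L) := Submodule.finrank_mono (Submodule.span_mono hsub)

end B

section C
variable {K L : Type*} [Field K] [Fintype K] [Field L] [Algebra K L]

/-- the q^n-power map as a K-linear endomorphism of L -/
noncomputable def qpow (K : Type*) (L : Type*) [Field K] [Fintype K] [Field L] [Algebra K L]
    (n : ℕ) : L →ₗ[K] L where
  toFun x := x ^ (Fintype.card K) ^ n
  map_add' x y := by
    show (x + y) ^ (Fintype.card K) ^ n = x ^ (Fintype.card K) ^ n + y ^ (Fintype.card K) ^ n
    set p := ringChar K with hpdef
    haveI : CharP K p := ringChar.charP K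
    have hp : p.Prime := CharP.char_is_prime K p
    haveI : Fact p.Prime := ⟨hp⟩
    haveI : CharP L p := charP_of_injective_algebraMap (algebraMap K L).injective p
    obtain ⟨f, -, hq⟩ := FiniteField.card K p
    simp only [hq, ← pow_mul]
    exact add_pow_char_pow x y p (↑f * n)
  map_smul' c x := by
    show (c • x) ^ (Fintype.card K) ^ n = c • (x ^ (Fintype.card K) ^ n)
    simp only [Algebra.smul_def, mul_pow, ← map_pow, FiniteField.pow_card_pow]

lemma vrk_le_finrank_of_frobClosed [FiniteDimensional K L] {k : ℕ} {V : Submodule L (Fin k → L)}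
    (hFC : FrobClosed K V) {v : Fin k → L} (hv : v ∈ V) : vrk K v ≤ Module.finrank L V := by
  classical
  haveI : Finite L := Module.finite_of_finite K
  haveI : Fintype L := Fintype.ofFinite L
  set q := Fintype.card K with hqdef
  have hq2 : 2 ≤ q := Fintype.one_lt_card
  set r := vrk K v with hr
  rcases Nat.eq_zero_or_pos r with h0 | hrpos
  · omega
  set w : Fin r → (Fin k → L) := fun s => fun i => v i ^ q ^ (s : ℕ) with hw
  have hwV : ∀ s, w s ∈ V := by
    have key : ∀ n : ℕ, (fun i => v i ^ q ^ n) ∈ V := by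
      intro n
      induction n with
      | zero => simpa using hv
      | succ n ih =>
        have := hFC _ ih
        have heq : (fun i => (v i ^ q ^ n) ^ q) = (fun i => v i ^ q ^ (n + 1)) := by
          funext i; rw [← pow_mul, ← pow_succ]
        rwa [heq] at this
    intro s; exact key _
  have hli : LinearIndependent L w := by
    rw [Fintype.linearIndependent_iff]
    intro c hc
    by_contra hcon
    push_neg at hcon
    obtain ⟨s₀, hs₀⟩ := hcon
    set ℓ : L →ₗ[K] L := ∑ s : Fin r, c s • qpow K L (s : ℕ) with hℓ
    have hker : Submodule.span K (Set.range v) ≤ LinearMap.ker ℓ := by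
      rw [Submodule.span_le]
      rintro x ⟨i, rfl⟩
      have := congrFun hc i
      simp only [Finset.sum_apply, Pi.smul_apply, smul_eq_mul, Pi.zero_apply] at this
      simp only [LinearMap.mem_ker, SetLike.mem_coe, hℓ, LinearMap.sum_apply,
        LinearMap.smul_apply, qpow, LinearMap.coe_mk, AddHom.coe_mk, smul_eq_mul]
      exact this
    set P : Polynomial L := ∑ s : Fin r, Polynomial.C (c s) * Polynomial.X ^ (q ^ (s : ℕ))
      with hPdef
    have hexp : ∀ s : Fin r, (q ^ (s₀ : ℕ) = q ^ (s : ℕ)) ↔ s = s₀ := by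
      intro s
      constructor
      · intro h
        exact Fin.ext (Nat.pow_right_injective hq2 h.symm)
      · rintro rfl; rfl
    have hco : P.coeff (q ^ (s₀ : ℕ)) = c s₀ := by
      have step : ∀ s ∈ (Finset.univ : Finset (Fin r)),
          (Polynomial.C (c s) * Polynomial.X ^ (q ^ (s:ℕ))).coeff (q ^ (s₀:ℕ))
            = if s = s₀ then c s else 0 := by
        intro s _
        rw [Polynomial.coeff_C_mul, Polynomial.coeff_X_pow]
        by_cases h : s = s₀
        · subst h; simp
        · rw [if_neg (fun hc => h ((hexp s).1 hc)), if_neg h, mul_zero]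
      calc P.coeff (q ^ (s₀ : ℕ))
          = ∑ s : Fin r, (Polynomial.C (c s) * Polynomial.X ^ (q ^ (s:ℕ))).coeff (q ^ (s₀:ℕ)) := by
            rw [hPdef, Polynomial.finset_sum_coeff]
        _ = ∑ s : Fin r, if s = s₀ then c s else 0 := Finset.sum_congr rfl step
        _ = c s₀ := by rw [Finset.sum_ite_eq' Finset.univ s₀ c]; simp
    have hP0 : P ≠ 0 := by
      intro h
      rw [h] at hco
      simp at hco
      exact hs₀ hco.symm
    have hroots : ∀ x ∈ Submodule.span K (Set.range v), P.eval x = 0 := by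
      intro x hx
      have hℓx : ℓ x = 0 := hker hx
      rw [hPdef]
      simp only [Polynomial.eval_finset_sum, Polynomial.eval_mul, Polynomial.eval_C,
        Polynomial.eval_pow, Polynomial.eval_X]
      simpa only [hℓ, LinearMap.sum_apply, LinearMap.smul_apply, qpow, LinearMap.coe_mk,
        AddHom.coe_mk, smul_eq_mul] using hℓx
    set W := Submodule.span K (Set.range v) with hW
    have hcardW : Fintype.card W = q ^ r := card_eq_pow_finrank
    have hsub : (W : Set L).toFinset ⊆ P.roots.toFinset := by
      intro x hx
      rw [Set.mem_toFinset] at hx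
      rw [Multiset.mem_toFinset, Polynomial.mem_roots hP0]
      exact hroots x hx
    have hdeg : P.natDegree ≤ q ^ (r - 1) := by
      rw [hPdef]
      apply Polynomial.natDegree_sum_le_of_forall_le
      intro s _
      refine (Polynomial.natDegree_C_mul_le _ _).trans ?_
      rw [Polynomial.natDegree_X_pow]
      exact Nat.pow_le_pow_right (by omega) (by omega)
    have hcard : q ^ r ≤ q ^ (r - 1) := by
      calc q ^ r = Fintype.card W := hcardW.symm
        _ = (W : Set L).toFinset.card := by rw [Set.toFinset_card]; exact Fintype.card_congr (Equiv.refl _)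
        _ ≤ P.roots.toFinset.card := Finset.card_le_card hsub
        _ ≤ Multiset.card P.roots := P.roots.toFinset_card_le
        _ ≤ P.natDegree := Polynomial.card_roots' P
        _ ≤ q ^ (r - 1) := hdeg
    have : q ^ (r - 1) < q ^ r := Nat.pow_lt_pow_right (by omega) (by omega)
    omega
  -- conclude r ≤ finrank L V
  have hli' : LinearIndependent L (fun s : Fin r => (⟨w s, hwV s⟩ : V)) := by
    apply LinearIndependent.of_comp V.subtype
    exact hli
  simpa using hli'.fintype_card_le_finrank

end C

lemma numineq {q m d e : ℕ} (hq : 2 ≤ q) (hd : 1 ≤ d) (hm : d + 1 ≤ m) (he : d + 1 ≤ e) :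
    (q ^ e - 1) * ((q ^ m) ^ (d - 1) - 1) < ((q ^ m) ^ d - 1) * (q ^ (e - d) - 1) := by
  set Q := q ^ m with hQ
  have hqpos : 0 < q := by omega
  have hQ2 : 2 ≤ Q := hq.trans (by
    calc q = q ^ 1 := (pow_one q).symm
    _ ≤ q ^ m := Nat.pow_le_pow_right (by omega) (by omega))
  have hQd2 : 2 ≤ Q ^ d := hQ2.trans (by
    calc Q = Q ^ 1 := (pow_one Q).symm
    _ ≤ Q ^ d := Nat.pow_le_pow_right (by omega) (by omega))
  have hstep : q ^ (e - d - 1) ≤ q ^ (e - d) - 1 := by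
    have h1 : q ^ (e - d) = q * q ^ (e - d - 1) := by
      rw [← pow_succ']
      congr 1
      omega
    have h2 : 1 ≤ q ^ (e - d - 1) := Nat.one_le_pow _ _ hqpos
    have h3 : 2 * q ^ (e - d - 1) ≤ q ^ (e - d) := by
      rw [h1]
      exact Nat.mul_le_mul_right _ hq
    omega
  by_cases hd1 : d = 1
  · subst hd1
    simp only [Nat.sub_self, pow_zero, Nat.sub_self, mul_zero, pow_one]
    have h4 : 1 ≤ q ^ (e - 1) - 1 := by
      have : q ≤ q ^ (e - 1) := by
        calc q = q ^ 1 := (pow_one q).symm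
        _ ≤ q ^ (e - 1) := Nat.pow_le_pow_right (by omega) (by omega)
      omega
    have : 0 < (Q - 1) * (q ^ (e - 1) - 1) := Nat.mul_pos (by omega) (by omega)
    omega
  · have hd2 : 2 ≤ d := by omega
    have hQd1 : 1 ≤ Q ^ (d - 1) := Nat.one_le_pow _ _ (by omega)
    have hQd12 : 2 ≤ Q ^ (d - 1) := hQ2.trans (by
      calc Q = Q ^ 1 := (pow_one Q).symm
      _ ≤ Q ^ (d - 1) := Nat.pow_le_pow_right (by omega) (by omega))
    have hqe1 : 1 ≤ q ^ e := Nat.one_le_pow _ _ hqpos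
    have step2 : q ^ (d + 1) * (Q ^ (d - 1) - 1) ≤ Q ^ d - 1 := by
      have e1 : q ^ (d + 1) * (Q ^ (d - 1) - 1) + q ^ (d + 1) = q ^ (d + 1) * Q ^ (d - 1) := by
        rw [← Nat.mul_succ]
        congr 1
        omega
      have e2 : q ^ (d + 1) * Q ^ (d - 1) ≤ Q ^ d := by
        calc q ^ (d + 1) * Q ^ (d - 1) ≤ Q * Q ^ (d - 1) :=
          Nat.mul_le_mul_right _ (Nat.pow_le_pow_right (by omega) (by omega))
        _ = Q ^ d := by rw [← pow_succ']; congr 1; omega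
      have e3 : 1 ≤ q ^ (d + 1) := Nat.one_le_pow _ _ hqpos
      omega
    calc (q ^ e - 1) * (Q ^ (d - 1) - 1)
        < q ^ e * (Q ^ (d - 1) - 1) := by
          exact Nat.mul_lt_mul_of_lt_of_le (by omega) (le_refl _) (by omega)
      _ = q ^ (e - d - 1) * (q ^ (d + 1) * (Q ^ (d - 1) - 1)) := by
          rw [← mul_assoc, ← pow_add]
          congr 2
          omega
      _ ≤ q ^ (e - d - 1) * (Q ^ d - 1) := Nat.mul_le_mul_left _ step2
      _ ≤ (Q ^ d - 1) * (q ^ (e - d) - 1) := by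
          rw [mul_comm]
          exact Nat.mul_le_mul_left _ hstep

noncomputable def dotL (L : Type*) [Field L] {d : ℕ} (x : Fin d → L) : (Fin d → L) →ₗ[L] L where
  toFun y := ∑ t, y t * x t
  map_add' a b := by simp [add_mul, Finset.sum_add_distrib]
  map_smul' c a := by simp [Finset.mul_sum, mul_assoc]

lemma dotL_apply {L : Type*} [Field L] {d : ℕ} (x y : Fin d → L) :
    dotL L x y = ∑ t, y t * x t := rfl

lemma dotL_comm {L : Type*} [Field L] {d : ℕ} (x y : Fin d → L) :
    dotL L x y = dotL L y x := by
  simp [dotL_apply, mul_comm]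

lemma card_filter_mem_ne_zero {R M : Type*} [Field R] [Fintype R] [AddCommGroup M] [Module R M]
    [Fintype M] [DecidableEq M] (T : Submodule R M) [DecidablePred (· ∈ T)] :
    (Finset.univ.filter (fun y => y ∈ T ∧ y ≠ 0)).card
      = Fintype.card R ^ Module.finrank R T - 1 := by
  classical
  have h1 : (Finset.univ.filter (fun y => y ∈ T ∧ y ≠ 0))
      = (Finset.univ.filter (fun y => y ∈ T)).erase 0 := by
    ext z
    simp only [Finset.mem_filter, Finset.mem_erase, Finset.mem_univ, true_and]
    tauto
  rw [h1, Finset.card_erase_of_mem (by simp [T.zero_mem])]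
  congr 1
  rw [← Fintype.card_subtype]
  rw [show Fintype.card {y // y ∈ T} = Fintype.card T from Fintype.card_congr (Equiv.refl _)]
  exact card_eq_pow_finrank

lemma finrank_ker_dotL {L : Type*} [Field L] {d : ℕ} {y : Fin d → L} (hy : y ≠ 0) :
    Module.finrank L (LinearMap.ker (dotL L y)) = d - 1 := by
  have hsurj : Function.Surjective (dotL L y) := by
    obtain ⟨t₀, ht₀⟩ : ∃ t₀, y t₀ ≠ 0 := by
      by_contra hcon
      push_neg at hcon
      exact hy (funext hcon)
    intro a
    refine ⟨Pi.single t₀ (a * (y t₀)⁻¹), ?_⟩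
    rw [dotL_apply, Finset.sum_eq_single t₀]
    · rw [Pi.single_eq_same, mul_assoc, inv_mul_cancel₀ ht₀, mul_one]
    · intro b _ hb
      rw [Pi.single_eq_of_ne hb, zero_mul]
    · intro h
      exact absurd (Finset.mem_univ t₀) h
  have h := LinearMap.finrank_range_add_finrank_ker (dotL L y)
  rw [LinearMap.range_eq_top.2 hsurj, finrank_top, Module.finrank_self,
    Module.finrank_fin_fun] at h
  omega

lemma finrank_map_add_inf_ker {K M M' : Type*} [Field K] [AddCommGroup M] [Module K M]
    [AddCommGroup M'] [Module K M'] (f : M →ₗ[K] M') (E : Submodule K M)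
    [FiniteDimensional K E] :
    Module.finrank K (E.map f) + Module.finrank K (E ⊓ LinearMap.ker f : Submodule K M)
      = Module.finrank K E := by
  have h := LinearMap.finrank_range_add_finrank_ker (f.domRestrict E)
  rw [LinearMap.range_domRestrict, LinearMap.ker_domRestrict] at h
  rw [← h]
  congr 1
  rw [← Submodule.map_comap_subtype, Submodule.finrank_map_subtype_eq]

lemma crux {K L : Type*} [Field K] [Fintype K] [Field L] [Algebra K L] [FiniteDimensional K L]
    {d : ℕ} (hd : 1 ≤ d) (hdm : d < Module.finrank K L)
    (E : Submodule K (Fin d → L))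
    (H : ∀ lam : Fin d → L,
      Module.finrank K (E.map ((dotL L lam).restrictScalars K)) ≤ d) :
    Module.finrank K E ≤ d := by
  classical
  haveI : Finite L := Module.finite_of_finite K
  haveI : Fintype L := Fintype.ofFinite L
  by_contra hcon
  push_neg at hcon
  set q := Fintype.card K with hqdef
  set m := Module.finrank K L with hm
  set e := Module.finrank K E with he
  have hq2 : 2 ≤ q := Fintype.one_lt_card
  have hQ : Fintype.card L = q ^ m := card_eq_pow_finrank
  have hQfun : Fintype.card (Fin d → L) = (q ^ m) ^ d := by
    rw [Fintype.card_fun, hQ, Fintype.card_fin]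
  set S : Finset ((Fin d → L) × (Fin d → L)) :=
    Finset.univ.filter
      (fun p => p.1 ≠ 0 ∧ (p.2 ∈ E ∧ p.2 ≠ 0) ∧ dotL L p.1 p.2 = 0) with hS
  set Ty : Finset (Fin d → L) := Finset.univ.filter (fun y => y ∈ E ∧ y ≠ 0) with hTy
  set Tl : Finset (Fin d → L) := Finset.univ.filter (fun l => l ≠ 0) with hTl
  have hTycard : Ty.card = q ^ e - 1 := card_filter_mem_ne_zero E
  have hTlcard : Tl.card = (q ^ m) ^ d - 1 := by
    rw [hTl, Finset.filter_ne', Finset.card_erase_of_mem (Finset.mem_univ 0),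
      Finset.card_univ, hQfun]
  -- upper count
  have hupper : S.card = (q ^ e - 1) * ((q ^ m) ^ (d - 1) - 1) := by
    have hfib : ∀ p ∈ S, p.2 ∈ Ty := by
      intro p hp
      rw [hS, Finset.mem_filter] at hp
      rw [hTy, Finset.mem_filter]
      exact ⟨Finset.mem_univ _, hp.2.2.1⟩
    rw [Finset.card_eq_sum_card_fiberwise hfib]
    have hcard : ∀ y ∈ Ty, (S.filter (fun p => p.2 = y)).card = (q ^ m) ^ (d - 1) - 1 := by
      intro y hy
      rw [hTy, Finset.mem_filter] at hy
      obtain ⟨-, hyE, hy0⟩ := hy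
      have himg : S.filter (fun p => p.2 = y)
          = (Finset.univ.filter (fun l => l ∈ LinearMap.ker (dotL L y) ∧ l ≠ 0)).image
              (fun l => (l, y)) := by
        ext p
        simp only [hS, Finset.mem_filter, Finset.mem_univ, true_and, Finset.mem_image,
          LinearMap.mem_ker]
        constructor
        · rintro ⟨⟨h1, -, h3⟩, rfl⟩
          exact ⟨p.1, ⟨by rwa [← dotL_comm], h1⟩, rfl⟩
        · rintro ⟨l, ⟨hker, hl0⟩, rfl⟩
          exact ⟨⟨hl0, ⟨hyE, hy0⟩, by rwa [dotL_comm]⟩, rfl⟩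
      rw [himg, Finset.card_image_of_injective _ (fun a b hab => (Prod.mk.injEq _ _ _ _ ▸ hab : _ ∧ _).1),
        card_filter_mem_ne_zero, finrank_ker_dotL hy0, hQ]
    rw [Finset.sum_congr rfl hcard, Finset.sum_const, hTycard, smul_eq_mul]
  -- lower count
  have hlower : ((q ^ m) ^ d - 1) * (q ^ (e - d) - 1) ≤ S.card := by
    have hfib : ∀ p ∈ S, p.1 ∈ Tl := by
      intro p hp
      rw [hS, Finset.mem_filter] at hp
      rw [hTl, Finset.mem_filter]
      exact ⟨Finset.mem_univ _, hp.2.1⟩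
    rw [Finset.card_eq_sum_card_fiberwise hfib]
    have hcard : ∀ l ∈ Tl, q ^ (e - d) - 1 ≤ (S.filter (fun p => p.1 = l)).card := by
      intro l hl
      rw [hTl, Finset.mem_filter] at hl
      obtain ⟨-, hl0⟩ := hl
      set D : Submodule K (Fin d → L) :=
        E ⊓ LinearMap.ker ((dotL L l).restrictScalars K) with hD
      have himg : S.filter (fun p => p.1 = l)
          = (Finset.univ.filter (fun y => y ∈ D ∧ y ≠ 0)).image (fun y => (l, y)) := by
        ext p
        simp only [hS, hD, Finset.mem_filter, Finset.mem_univ, true_and, Finset.mem_image,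
          Submodule.mem_inf, LinearMap.mem_ker, LinearMap.restrictScalars_apply]
        constructor
        · rintro ⟨⟨-, ⟨h2, h3⟩, h4⟩, rfl⟩
          exact ⟨p.2, ⟨⟨h2, h4⟩, h3⟩, rfl⟩
        · rintro ⟨y, ⟨⟨hyE, hker⟩, hy0⟩, rfl⟩
          exact ⟨⟨hl0, ⟨hyE, hy0⟩, hker⟩, rfl⟩
      have hrk : e - d ≤ Module.finrank K D := by
        have h := finrank_map_add_inf_ker ((dotL L l).restrictScalars K) E
        rw [← hD] at h
        have h2 := H l
        omega
      rw [himg, Finset.card_image_of_injective _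
        (fun a b hab => (Prod.mk.injEq _ _ _ _ ▸ hab : _ ∧ _).2),
        card_filter_mem_ne_zero]
      have : q ^ (e - d) ≤ q ^ Module.finrank K D := Nat.pow_le_pow_right (by omega) hrk
      exact Nat.sub_le_sub_right this 1
    calc ((q ^ m) ^ d - 1) * (q ^ (e - d) - 1) = ∑ _l ∈ Tl, (q ^ (e - d) - 1) := by
          rw [Finset.sum_const, hTlcard, smul_eq_mul]
      _ ≤ ∑ l ∈ Tl, (S.filter (fun p => p.1 = l)).card := Finset.sum_le_sum hcard
  rw [hupper] at hlower
  exact absurd hlower (not_le.2 (numineq hq2 hd (by omega) (by omega)))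

section glue
variable {K L : Type*} [Field K] [Fintype K] [Field L] [Algebra K L]

lemma mulVec_apply' {R : Type*} [CommRing R] {n k : ℕ} (M : Matrix (Fin n) (Fin k) R)
    (w : Fin k → R) (s : Fin n) : M.mulVec w s = ∑ i, M s i * w i := rfl


lemma linearIndependent_algebraMap_pi [FiniteDimensional K L] {n k : ℕ}
    (x : Fin n → Fin k → K) (h : LinearIndependent K x) :
    LinearIndependent L (fun s => fun i => algebraMap K L (x s i)) := by
  classical
  rw [Fintype.linearIndependent_iff] at h ⊢
  intro c hc
  set b := Module.finBasis K L with hb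
  have hcoord : ∀ i, ∑ s, (x s i) • (c s) = 0 := by
    intro i
    have h0 := congrFun hc i
    simp only [Finset.sum_apply, Pi.smul_apply, smul_eq_mul, Pi.zero_apply] at h0
    rw [← h0]
    exact Finset.sum_congr rfl fun s _ => by rw [Algebra.smul_def, mul_comm]
  intro s
  have key : ∀ j, b.repr (c s) j = 0 := by
    intro j
    have hz : ∀ i, ∑ s', (x s' i) * (b.repr (c s') j) = 0 := by
      intro i
      have h1 := congrArg (fun z => b.repr z j) (hcoord i)
      simpa [map_sum, Finsupp.smul_apply, smul_eq_mul] using h1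
    exact h (fun s' => b.repr (c s') j) (funext fun i => by
      simp only [Finset.sum_apply, Pi.smul_apply, smul_eq_mul, Pi.zero_apply]
      rw [← hz i]
      exact Finset.sum_congr rfl fun s' _ => mul_comm _ _) s
  have : b.repr (c s) = 0 := Finsupp.ext key
  exact (LinearEquiv.map_eq_zero_iff b.repr).1 this


lemma frobClosed_of_eq [FiniteDimensional K L] {k m : ℕ}
    (hk : 1 ≤ k) (hkm : k ≤ m) (hm : Module.finrank K L = m)
    (V : Submodule L (Fin k → L)) (heq : Module.finrank L V = maxrk K V) :
    FrobClosed K V := by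
  classical
  set d := Module.finrank L V with hd
  have hvrk : ∀ v ∈ V, vrk K v ≤ d := by
    intro v hv
    have : vrk K v ∈ {r | ∃ v ∈ V, vrk K v = r} := ⟨v, hv, rfl⟩
    have h2 := le_csSup (maxrk_bddAbove V) this
    rw [show sSup {r | ∃ v ∈ V, vrk K v = r} = maxrk K V from rfl, ← heq] at h2
    exact h2
  have hdk : d ≤ k := by
    have := Submodule.finrank_le V
    rwa [Module.finrank_fin_fun] at this
  by_cases hdk' : d = k
  · -- V is everything
    have hVtop : V = ⊤ := by
      apply Submodule.eq_top_of_finrank_eq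
      rw [← hd, hdk', Module.finrank_fin_fun]
    rw [hVtop]
    intro v _
    trivial
  by_cases hd0 : d = 0
  · have hVbot : V = ⊥ := by
      rw [← Submodule.finrank_eq_zero (R := L) (M := Fin k → L), ← hd, hd0]
    rw [hVbot]
    intro v hv
    rw [Submodule.mem_bot] at hv ⊢
    subst hv
    funext i
    exact zero_pow Fintype.card_ne_zero
  -- main case
  have hd1 : 1 ≤ d := by omega
  have hdm : d < Module.finrank K L := by rw [hm]; omega
  set bV : Basis (Fin (Module.finrank L V)) L V := Module.finBasis L V with hbV
  set Φ : (Fin k → K) →ₗ[K] (Fin d → L) :=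
    { toFun := fun x => fun t => ∑ i, x i • ((bV t : Fin k → L) i)
      map_add' := fun x y => by
        funext t
        simp [add_smul, Finset.sum_add_distrib]
      map_smul' := fun c x => by
        funext t
        simp [mul_smul, ← Finset.smul_sum] } with hΦ
  have ident : ∀ (c : Fin d → L) (x : Fin k → K),
      ∑ i, algebraMap K L (x i) * (∑ t, c t • ((bV t : Fin k → L))) i
        = ∑ t, c t * Φ x t := by
    intro c x
    have h1 : ∀ i, (∑ t, c t • ((bV t : Fin k → L))) i
        = ∑ t, c t * (bV t : Fin k → L) i := by
      intro i
      simp [Finset.sum_apply]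
    calc ∑ i, algebraMap K L (x i) * (∑ t, c t • ((bV t : Fin k → L))) i
        = ∑ i, ∑ t, c t * (algebraMap K L (x i) * (bV t : Fin k → L) i) := by
          refine Finset.sum_congr rfl fun i _ => ?_
          rw [h1 i, Finset.mul_sum]
          exact Finset.sum_congr rfl fun t _ => by ring
      _ = ∑ t, ∑ i, c t * (algebraMap K L (x i) * (bV t : Fin k → L) i) := Finset.sum_comm
      _ = ∑ t, c t * Φ x t := by
          refine Finset.sum_congr rfl fun t _ => ?_
          rw [← Finset.mul_sum]
          congr 1
          rw [hΦ]
          simp only [LinearMap.coe_mk, AddHom.coe_mk]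
          exact Finset.sum_congr rfl fun i _ => (Algebra.smul_def _ _).symm
  set E : Submodule K (Fin d → L) := LinearMap.range Φ with hE
  set N : Submodule K (Fin k → K) := LinearMap.ker Φ with hN
  -- the rank hypothesis for crux
  have Hcrux : ∀ lam : Fin d → L,
      Module.finrank K (E.map ((dotL L lam).restrictScalars K)) ≤ d := by
    intro lam
    set v : V := ∑ t, lam t • bV t with hv
    have hvval : (v : Fin k → L) = ∑ t, lam t • ((bV t : Fin k → L)) := by
      rw [hv]
      simp
    have hle : E.map ((dotL L lam).restrictScalars K)
        ≤ Submodule.span K (Set.range (v : Fin k → L)) := by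
      rintro z hz
      rw [Submodule.mem_map] at hz
      obtain ⟨y, hy, rfl⟩ := hz
      rw [hE] at hy
      obtain ⟨x, rfl⟩ := hy
      have : (dotL L lam).restrictScalars K (Φ x) = ∑ i, x i • (v : Fin k → L) i := by
        rw [LinearMap.restrictScalars_apply, dotL_apply]
        calc ∑ t, Φ x t * lam t = ∑ t, lam t * Φ x t :=
              Finset.sum_congr rfl fun t _ => mul_comm _ _
          _ = ∑ i, algebraMap K L (x i) * (∑ t, lam t • ((bV t : Fin k → L))) i :=
              (ident lam x).symm
          _ = ∑ i, x i • (v : Fin k → L) i := by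
              refine Finset.sum_congr rfl fun i _ => ?_
              rw [hvval, Algebra.smul_def]
      rw [this]
      exact Submodule.sum_mem _ fun i _ =>
        Submodule.smul_mem _ _ (Submodule.subset_span (Set.mem_range_self i))
    calc Module.finrank K (E.map ((dotL L lam).restrictScalars K))
        ≤ Module.finrank K (Submodule.span K (Set.range (v : Fin k → L))) :=
          Submodule.finrank_mono hle
      _ ≤ d := hvrk _ v.2
  have hE_le : Module.finrank K E ≤ d := crux hd1 hdm E Hcrux
  -- dimension of N
  have hN_rank : Module.finrank K E + Module.finrank K N = k := by
    have := LinearMap.finrank_range_add_finrank_ker Φ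
    rwa [Module.finrank_fin_fun] at this
  set n := Module.finrank K N with hn
  set bN : Basis (Fin (Module.finrank K N)) K N := Module.finBasis K N with hbN
  set x : Fin n → (Fin k → K) := fun s => (bN s : Fin k → K) with hx
  have hxli : LinearIndependent K x :=
    bN.linearIndependent.map' N.subtype (Submodule.ker_subtype N)
  set M : Matrix (Fin n) (Fin k) L := Matrix.of (fun s i => algebraMap K L (x s i)) with hM
  have hMli : LinearIndependent L (fun s => fun i => M s i) :=
    linearIndependent_algebraMap_pi x hxli
  -- the transpose has full rank
  have hMTinj : Function.Injective (Matrix.mulVecLin (Matrix.transpose M)) := by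
    rw [← LinearMap.ker_eq_bot, eq_bot_iff]
    intro c hc
    rw [LinearMap.mem_ker] at hc
    rw [Submodule.mem_bot]
    rw [Fintype.linearIndependent_iff] at hMli
    have : ∀ s, c s = 0 := by
      apply hMli
      funext i
      have h2 : ∑ s', Matrix.transpose M i s' * c s' = 0 := by
        have h3 := congrFun hc i
        rw [Matrix.mulVecLin_apply, mulVec_apply'] at h3
        simpa using h3
      simp only [Finset.sum_apply, Pi.smul_apply, smul_eq_mul, Pi.zero_apply]
      rw [← h2]
      exact Finset.sum_congr rfl fun s _ => by rw [Matrix.transpose_apply]; exact mul_comm _ _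
    funext s
    exact this s
  have hrankM : M.rank = n := by
    have h1 : (Matrix.transpose M).rank = n := by
      rw [Matrix.rank]
      rw [LinearMap.finrank_range_of_inj hMTinj, Module.finrank_fin_fun]
    rw [← Matrix.rank_transpose, h1]
  have hkerΨ : Module.finrank L (LinearMap.ker M.mulVecLin) = k - n := by
    have := LinearMap.finrank_range_add_finrank_ker M.mulVecLin
    rw [Module.finrank_fin_fun] at this
    have h2 : Module.finrank L (LinearMap.range M.mulVecLin) = n := hrankM
    omega
  -- V is contained in ker
  have hVle : V ≤ LinearMap.ker M.mulVecLin := by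
    intro w hw
    rw [LinearMap.mem_ker]
    funext s
    have hrepr : w = ∑ t, (bV.repr ⟨w, hw⟩ t) • ((bV t : Fin k → L)) := by
      have := bV.sum_repr ⟨w, hw⟩
      calc w = ((∑ t, (bV.repr ⟨w, hw⟩ t) • bV t : V) : Fin k → L) := by rw [this]
        _ = ∑ t, (bV.repr ⟨w, hw⟩ t) • ((bV t : Fin k → L)) := by
          simp only [Submodule.coe_sum, Submodule.coe_smul]
    have hΦx : Φ (x s) = 0 := by
      have : x s ∈ N := (bN s).2
      rwa [hN, LinearMap.mem_ker] at this
    rw [Matrix.mulVecLin_apply]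
    show (Matrix.mulVec M w) s = (0 : Fin n → L) s
    rw [mulVec_apply']
    show ∑ i, M s i * w i = (0 : L)
    calc ∑ i, M s i * w i
        = ∑ i, algebraMap K L (x s i) * (∑ t, (bV.repr ⟨w, hw⟩ t) • ((bV t : Fin k → L))) i := by
          refine Finset.sum_congr rfl fun i _ => ?_
          rw [hM]
          congr 1
          exact congrFun hrepr i
      _ = ∑ t, (bV.repr ⟨w, hw⟩ t) * Φ (x s) t := ident _ _
      _ = 0 := by rw [hΦx]; simp
  -- conclude V = ker
  have hVeq : V = LinearMap.ker M.mulVecLin := by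
    apply Submodule.eq_of_le_of_finrank_le hVle
    rw [hkerΨ, ← hd]
    omega
  -- Frobenius closedness of the kernel
  intro w hw
  rw [hVeq] at hw ⊢
  rw [LinearMap.mem_ker] at hw ⊢
  set p := ringChar K with hp
  haveI : CharP K p := ringChar.charP K
  have hprime : p.Prime := CharP.char_is_prime K p
  haveI : Fact p.Prime := ⟨hprime⟩
  haveI : CharP L p := charP_of_injective_algebraMap (algebraMap K L).injective p
  obtain ⟨f, -, hq⟩ := FiniteField.card K p
  funext s
  have h0 : ∑ i, M s i * w i = 0 := by
    have := congrFun hw s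
    rwa [Matrix.mulVecLin_apply, mulVec_apply'] at this
  rw [Matrix.mulVecLin_apply, mulVec_apply']
  calc ∑ i, M s i * w i ^ Fintype.card K
      = ∑ i, (M s i * w i) ^ Fintype.card K := by
        refine Finset.sum_congr rfl fun i _ => ?_
        rw [mul_pow]
        congr 1
        rw [hM]
        show algebraMap K L (x s i) = (algebraMap K L (x s i)) ^ Fintype.card K
        rw [← map_pow, FiniteField.pow_card]
    _ = ∑ i, iterateFrobenius L p f (M s i * w i) := by
        refine Finset.sum_congr rfl fun i _ => ?_
        rw [iterateFrobenius_def, ← hq]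
    _ = iterateFrobenius L p f (∑ i, M s i * w i) := (map_sum _ _ _).symm
    _ = 0 := by rw [h0, map_zero]
  

end glue

/-- for 1 ≤ k ≤ m, a subspace V ⊆ F_{q^m}^k is Frobenius-closed
iff it is an optimal Gabidulin anticode, i.e. dim_{F_{q^m}} V = maxrk V. -/
theorem stmt8 {K L : Type*} [Field K] [Field L] [Algebra K L] [Fintype K] {k m : ℕ}
    (hk : 1 ≤ k) (hkm : k ≤ m) (hm : Module.finrank K L = m)
    (V : Submodule L (Fin k → L)) :
    FrobClosed K V ↔ Module.finrank L V = maxrk K V := by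
  haveI : FiniteDimensional K L := FiniteDimensional.of_finrank_pos (by rw [hm]; omega)
  constructor
  · intro hFC
    refine le_antisymm ?_ ?_
    · obtain ⟨v, hv, hge⟩ := exists_vrk_ge
        (by rw [finrank_top, Module.finrank_fin_fun, hm]; exact hkm) V
      exact hge.trans (le_csSup (maxrk_bddAbove V) ⟨v, hv, rfl⟩)
    · refine csSup_le (maxrk_nonempty V) ?_
      rintro r ⟨v, hv, rfl⟩
      exact vrk_le_finrank_of_frobClosed hFC hv
  · intro heq
    exact frobClosed_of_eq hk hkm hm V heq
end

section
/- Let 1 ≤ t < k ≤ m and let M ∈ Mat(t × k, F_{q^m}) be a full-rank matrix that is almost in row-reduced echelon form (some permutation of its rows is in row-reduced echelon form), whose first row has at least one entry in F_{q^m} \ F_q. Then there exist elements α_1, ..., α_t ∈ F_{q^m}, linearly independent over F_q, such that the vector Σ_i α_i M_i (where M_i are the rows of M) has rank at least t + 1, where the rank of a vector is the F_q-dimension of the span of its components. -/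
open Submodule


lemma span_one_mem {K L : Type*} [Field K] [Field L] [Algebra K L] {x : L} :
    x ∈ Submodule.span K ({1} : Set L) ↔ x ∈ (algebraMap K L).range := by
  rw [Submodule.mem_span_singleton]
  constructor
  · rintro ⟨a, rfl⟩; exact ⟨a, Algebra.algebraMap_eq_smul_one a⟩
  · rintro ⟨a, rfl⟩; exact ⟨a, (Algebra.algebraMap_eq_smul_one a).symm⟩

lemma key_aux {K L : Type*} [Field K] [Field L] [Algebra K L] {t m : ℕ}
    (ht : 1 ≤ t) (htm : t + 1 ≤ m) (hm : Module.finrank K L = m)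
    (c : Fin t → L) (hc : c ⟨0, ht⟩ ∉ (algebraMap K L).range) :
    ∃ α : Fin t → L, LinearIndependent K α ∧
      (∑ i, α i * c i) ∉ Submodule.span K (Set.range α) := by
  classical
  have hfd : FiniteDimensional K L :=
    FiniteDimensional.of_finrank_pos (by omega : 0 < Module.finrank K L)
  set c0 : L := c ⟨0, ht⟩ with hc0def
  have hc0span : c0 ∉ Submodule.span K ({1} : Set L) := fun h => hc (span_one_mem.mp h)
  rcases eq_or_lt_of_le ht with ht1 | ht2
  · -- t = 1
    obtain rfl : t = 1 := ht1.symm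
    refine ⟨fun _ => 1, linearIndependent_unique_iff.mpr one_ne_zero, ?_⟩
    have h1 : (∑ i : Fin 1, (1:L) * c i) = c0 := by
      simp [hc0def]
    have h2 : Set.range (fun _ : Fin 1 => (1:L)) = {1} := by
      simp [Set.range_const]
    rw [h1, h2]
    exact hc0span
  · -- t ≥ 2
    by_contra hcon
    push_neg at hcon
    set i0 : Fin t := ⟨0, ht⟩ with hi0def
    set i1 : Fin t := ⟨1, ht2⟩ with hi1def
    have hi01 : i0 ≠ i1 := by simp [hi0def, hi1def, Fin.ext_iff]
    have h1c0 : c0 ≠ (1:L) := fun h => hc0span (h ▸ Submodule.subset_span rfl)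
    -- build an independent family β with β i1 = 1 and c0 ∉ span (range β)
    have hs : LinearIndepOn K id (insert c0 {1} : Set L) := by
      rw [linearIndepOn_id_insert (by simpa using h1c0)]
      exact ⟨(linearIndepOn_singleton_iff K).mpr one_ne_zero, hc0span⟩
    set B := Module.Basis.extend hs with hBdef
    haveI : Fintype (hs.extend (Set.subset_univ _)) := FiniteDimensional.fintypeBasisIndex B
    have hcard : Fintype.card (hs.extend (Set.subset_univ _)) = m := by
      rw [← hm, Module.finrank_eq_card_basis B]
    set x1 : hs.extend (Set.subset_univ _) :=
      ⟨1, hs.subset_extend _ (Set.mem_insert_of_mem _ rfl)⟩ with hx1def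
    set x0 : hs.extend (Set.subset_univ _) :=
      ⟨c0, hs.subset_extend _ (Set.mem_insert _ _)⟩ with hx0def
    have hx10 : x1 ≠ x0 := fun h => h1c0 (congrArg Subtype.val h).symm
    have hcardτ : Fintype.card {x : hs.extend (Set.subset_univ _) // x ≠ x0} = m - 1 := by
      simp [Fintype.card_subtype_compl, Fintype.card_subtype_eq, hcard]
    obtain ⟨g0⟩ := Function.Embedding.nonempty_of_card_le
      (show Fintype.card (Fin t) ≤
        Fintype.card {x : hs.extend (Set.subset_univ _) // x ≠ x0} by
        rw [hcardτ, Fintype.card_fin]; omega)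
    set y1 : {x : hs.extend (Set.subset_univ _) // x ≠ x0} := ⟨x1, hx10⟩ with hy1def
    set g : Fin t ↪ {x : hs.extend (Set.subset_univ _) // x ≠ x0} :=
      g0.trans (Equiv.swap (g0 i1) y1).toEmbedding with hgdef
    have hg1 : g i1 = y1 := by simp [hgdef]
    set β : Fin t → L := fun i => B ((g i : {x : hs.extend (Set.subset_univ _) // x ≠ x0}) : hs.extend (Set.subset_univ _)) with hβdef
    have hβli : LinearIndependent K β := by
      apply B.linearIndependent.comp
      intro a b hab
      exact g.injective (Subtype.ext hab)
    have hβ1 : β i1 = 1 := by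
      rw [hβdef]
      simp only [hg1]
      exact Module.Basis.extend_apply_self hs x1
    have hc0β : c0 ∉ Submodule.span K (Set.range β) := by
      have hre : Set.range β = B '' (Set.range fun i =>
          ((g i : {x : hs.extend (Set.subset_univ _) // x ≠ x0}) : hs.extend (Set.subset_univ _))) := by
        rw [← Set.range_comp]; rfl
      have hx0n : x0 ∉ Set.range fun i =>
          ((g i : {x : hs.extend (Set.subset_univ _) // x ≠ x0}) : hs.extend (Set.subset_univ _)) := by
        rintro ⟨i, hi⟩
        exact (g i).2 hi
      have := B.linearIndependent.notMem_span_image hx0n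
      rw [Module.Basis.extend_apply_self] at this
      rw [hre]
      exact this
    -- the perturbed family
    set α' : Fin t → L := fun i => β i + if i = i0 then β i1 else 0 with hα'def
    have hα'li : LinearIndependent K α' := by
      rw [Fintype.linearIndependent_iff]
      intro g hg
      have e1 : ∑ i, g i • α' i = (∑ i, g i • β i) + g i0 • β i1 := by
        simp [hα'def, smul_add, Finset.sum_add_distrib, smul_ite, Finset.sum_ite_eq']
      have e2 : ∑ i, (g i + if i = i1 then g i0 else 0) • β i
          = (∑ i, g i • β i) + g i0 • β i1 := by
        simp [add_smul, Finset.sum_add_distrib, ite_smul, Finset.sum_ite_eq']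
      have hz := Fintype.linearIndependent_iff.mp hβli _ (by rw [e2, ← e1, hg])
      have hgi0 : g i0 = 0 := by
        have := hz i0
        simpa [hi01] using this
      intro i
      by_cases hii : i = i1
      · have := hz i
        rw [hii] at this ⊢
        simpa [hgi0] using this
      · have := hz i
        simpa [hii] using this
    have hWα' : Submodule.span K (Set.range α') ≤ Submodule.span K (Set.range β) := by
      rw [Submodule.span_le]
      rintro x ⟨i, rfl⟩
      refine Submodule.add_mem _ (Submodule.subset_span ⟨i, rfl⟩) ?_
      split
      · exact Submodule.subset_span ⟨i1, rfl⟩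
      · exact Submodule.zero_mem _
    have hfβ := hcon β hβli
    have hfα' := hWα' (hcon α' hα'li)
    have hsum : ∑ i, α' i * c i = (∑ i, β i * c i) + c0 := by
      simp [hα'def, add_mul, Finset.sum_add_distrib, ite_mul, Finset.sum_ite_eq', hβ1, hc0def]
    have : c0 ∈ Submodule.span K (Set.range β) := by
      have := Submodule.sub_mem _ hfα' hfβ
      rwa [hsum, add_sub_cancel_left] at this
    exact hc0β this

/-- Row-reduced echelon form with strictly increasing pivots. -/
def IsRRE {t k : ℕ} {F : Type*} [Field F] (M : Matrix (Fin t) (Fin k) F) : Prop :=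
  ∃ p : Fin t → Fin k, StrictMono p ∧
    (∀ i, M i (p i) = 1) ∧
    (∀ i j, j < p i → M i j = 0) ∧
    (∀ i i', i' ≠ i → M i' (p i) = 0)

/-- if M is a full-rank t × k matrix over F_{q^m} (t < k ≤ m),
almost in row-reduced echelon form, whose first row has an entry outside F_q,
then there are F_q-independent α₁,...,α_t with rk(∑ αᵢ Mᵢ) ≥ t + 1. -/
theorem stmt9 {K L : Type*} [Field K] [Field L] [Algebra K L] [Fintype K] {t k m : ℕ}
    (ht : 1 ≤ t) (htk : t < k) (hkm : k ≤ m) (hm : Module.finrank K L = m)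
    (M : Matrix (Fin t) (Fin k) L)
    (hfull : LinearIndependent L (fun i => M i))
    (halmost : ∃ π : Equiv.Perm (Fin t), IsRRE (Matrix.of fun i => M (π i)))
    (hrow : ∃ j, M ⟨0, ht⟩ j ∉ (algebraMap K L).range) :
    ∃ α : Fin t → L, LinearIndependent K α ∧ t + 1 ≤ vrk K (∑ i, α i • M i) := by
  classical
  obtain ⟨π, p, hmono, hpiv1, hleft, hcol⟩ := halmost
  obtain ⟨j0, hj0⟩ := hrow
  have hfd : FiniteDimensional K L :=
    FiniteDimensional.of_finrank_pos (by omega : 0 < Module.finrank K L)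
  obtain ⟨α, hαli, hαnot⟩ := key_aux ht (by omega) hm (fun i => M i j0) hj0
  refine ⟨α, hαli, ?_⟩
  set v : Fin k → L := ∑ i, α i • M i with hvdef
  have hv : ∀ j, v j = ∑ i, α i * M i j := by
    intro j
    simp [hvdef, Finset.sum_apply]
  have hpivv : ∀ i : Fin t, v (p i) = α (π i) := by
    intro i
    rw [hv]
    rw [← Equiv.sum_comp π (fun r => α r * M r (p i))]
    rw [Fintype.sum_eq_single i]
    · rw [show M (π i) (p i) = 1 from hpiv1 i, mul_one]
    · intro x hx
      rw [show M (π x) (p i) = 0 from hcol i x hx, mul_zero]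
  have hαmem : ∀ jj : Fin t, α jj ∈ Submodule.span K (Set.range v) := by
    intro jj
    have : α jj = v (p (π.symm jj)) := by rw [hpivv, Equiv.apply_symm_apply]
    rw [this]
    exact Submodule.subset_span ⟨_, rfl⟩
  have hle : Submodule.span K (Set.range α) ≤ Submodule.span K (Set.range v) := by
    rw [Submodule.span_le]
    rintro x ⟨jj, rfl⟩
    exact hαmem jj
  have hlt : Submodule.span K (Set.range α) < Submodule.span K (Set.range v) := by
    refine lt_of_le_of_ne hle (fun he => hαnot ?_)
    rw [he]
    have : (∑ i, α i * M i j0) = v j0 := (hv j0).symm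
    rw [this]
    exact Submodule.subset_span ⟨j0, rfl⟩
  have h1 : Module.finrank K (Submodule.span K (Set.range α)) = t := by
    rw [finrank_span_eq_card hαli, Fintype.card_fin]
  have := finrank_lt_finrank_of_lt hlt
  rw [h1] at this
  exact this
end

section
/- Let 1 ≤ k ≤ m and let 𝒞 ⊆ Mat(k × m, F_q) be an F_q-subspace of matrices. Then dim_{F_q}(𝒞) ≤ m · maxrk(𝒞), where maxrk(𝒞) is the maximum matrix rank of elements of 𝒞. -/
/-- Maximum rank of a Delsarte code 𝒞 ⊆ Mat(k × m, F_q). -/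
noncomputable def dmaxrk {K : Type*} [Field K] {k m : ℕ}
    (𝒞 : Submodule K (Matrix (Fin k) (Fin m) K)) : ℕ :=
  sSup {r | ∃ M ∈ 𝒞, M.rank = r}

namespace Stmt11Aux

open Polynomial

noncomputable section

variable (K : Type*) [Field K] [Fintype K]

/-- A field extension of `K` of degree `m`: the splitting field of `X^(q^m) - X`. -/
def EF (m : ℕ) : Type _ :=
  SplittingField (X ^ (Fintype.card K) ^ m - X : K[X])

instance (m : ℕ) : Field (EF K m) :=
  inferInstanceAs (Field (SplittingField _))

instance (m : ℕ) : Algebra K (EF K m) :=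
  inferInstanceAs (Algebra K (SplittingField _))

instance (m : ℕ) : FiniteDimensional K (EF K m) := by
  dsimp only [EF]; exact (inferInstance : FiniteDimensional K (SplittingField (X ^ (Fintype.card K) ^ m - X : K[X])))

instance (m : ℕ) : Finite (EF K m) := Module.finite_of_finite K

variable {K}

theorem EF_add_pow (m : ℕ) (x y : EF K m) (n : ℕ) :
    (x + y) ^ Fintype.card K ^ n = x ^ Fintype.card K ^ n + y ^ Fintype.card K ^ n := by
  obtain ⟨p, hp⟩ := CharP.exists K
  haveI : CharP K p := hp
  obtain ⟨e, hpp, hqe⟩ := FiniteField.card K p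
  haveI : Fact p.Prime := ⟨hpp⟩
  haveI : CharP (EF K m) p :=
    charP_of_injective_algebraMap (algebraMap K (EF K m)).injective p
  rw [hqe, ← pow_mul, add_pow_char_pow]

theorem EF_neg_pow (m : ℕ) (x : EF K m) (n : ℕ) :
    (-x) ^ Fintype.card K ^ n = -(x ^ Fintype.card K ^ n) := by
  obtain ⟨p, hp⟩ := CharP.exists K
  haveI : CharP K p := hp
  obtain ⟨e, hpp, hqe⟩ := FiniteField.card K p
  haveI : Fact p.Prime := ⟨hpp⟩
  haveI : CharP (EF K m) p :=
    charP_of_injective_algebraMap (algebraMap K (EF K m)).injective p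
  rw [hqe, ← pow_mul, neg_pow, neg_one_pow_char_pow, neg_one_mul]

theorem EF_algebraMap_pow (m : ℕ) (c : K) (n : ℕ) :
    (algebraMap K (EF K m) c) ^ Fintype.card K ^ n = algebraMap K (EF K m) c := by
  rw [← map_pow, FiniteField.pow_card_pow]

/-- The degree of `EF K m` over `K` is `m`. -/
theorem finrank_EF {m : ℕ} (hm : m ≠ 0) : Module.finrank K (EF K m) = m := by
  haveI : Fintype (EF K m) := Fintype.ofFinite _
  have hq1 : 1 < Fintype.card K := Fintype.one_lt_card
  set q := Fintype.card K with hqdef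
  set g : K[X] := X ^ q ^ m - X with hg
  have aux : g ≠ 0 := FiniteField.X_pow_card_pow_sub_X_ne_zero _ hm hq1
  obtain ⟨p, hp⟩ := CharP.exists K
  haveI : CharP K p := hp
  obtain ⟨e, hpp, hqe⟩ := FiniteField.card K p
  haveI : Fact p.Prime := ⟨hpp⟩
  have hsep : g.Separable := by
    have hpq : p ∣ q := by rw [hqdef, hqe]; exact dvd_pow_self p e.2.ne'
    have hdvd : p ∣ q ^ m := dvd_pow hpq hm
    exact galois_poly_separable p (q ^ m) hdvd
  have key : Fintype.card (g.rootSet (EF K m)) = g.natDegree :=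
    card_rootSet_eq_natDegree hsep (SplittingField.splits g)
  have ndeg : g.natDegree = q ^ m :=
    FiniteField.X_pow_card_pow_sub_X_natDegree_eq _ hm hq1
  have hroot : ∀ y : EF K m, y ∈ g.rootSet (EF K m) ↔ y ^ q ^ m = y := by
    intro y
    rw [mem_rootSet_of_ne aux, hg, map_sub, map_pow, aeval_X, sub_eq_zero]
  have huniv : g.rootSet (EF K m) = Set.univ := by
    rw [Set.eq_univ_iff_forall]
    intro x
    have hx : x ∈ Algebra.adjoin K (g.rootSet (EF K m)) := by
      have hadj : Algebra.adjoin K (g.rootSet (EF K m)) = ⊤ := SplittingField.adjoin_rootSet g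
      rw [hadj]
      exact Algebra.mem_top
    rw [Algebra.mem_adjoin_iff] at hx
    rw [hroot]
    refine Subring.closure_induction (p := fun y _ => y ^ q ^ m = y) ?_ ?_ ?_ ?_ ?_ ?_ hx
    · rintro y (⟨r, rfl⟩ | hy)
      · exact EF_algebraMap_pow m r m
      · exact (hroot y).mp hy
    · exact zero_pow (by positivity)
    · exact one_pow _
    · intro y z _ _ hy hz
      rw [EF_add_pow, hy, hz]
    · intro y _ hy
      rw [EF_neg_pow, hy]
    · intro y z _ _ hy hz
      rw [mul_pow, hy, hz]
  rw [ndeg] at key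
  simp_rw [huniv, ← Fintype.ofEquiv_card (Equiv.Set.univ _)] at key
  rw [@Module.card_eq_pow_finrank K (EF K m) _ _ _ _ (_)] at key
  exact Nat.pow_right_injective hq1 key

section Lin

variable {m : ℕ}

/-- The `K`-linear "linearized polynomial" map `x ↦ ∑ aᵢ x^(q^i)` on `EF K m`. -/
def lmap {j : ℕ} (a : Fin j → EF K m) : EF K m →ₗ[K] EF K m where
  toFun x := ∑ i : Fin j, a i * x ^ (Fintype.card K) ^ (i : ℕ)
  map_add' x y := by
    simp_rw [EF_add_pow, mul_add]
    rw [Finset.sum_add_distrib]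
  map_smul' c x := by
    simp only [RingHom.id_apply, Finset.smul_sum]
    refine Finset.sum_congr rfl fun i _ => ?_
    rw [Algebra.smul_def, Algebra.smul_def, mul_pow, EF_algebraMap_pow, mul_left_comm]

theorem lmap_sub {j : ℕ} (a a' : Fin j → EF K m) (x : EF K m) :
    lmap (a - a') x = lmap a x - lmap a' x := by
  simp only [lmap, LinearMap.coe_mk, AddHom.coe_mk, Pi.sub_apply, sub_mul]
  rw [Finset.sum_sub_distrib]

theorem lmap_zero_apply {j : ℕ} (x : EF K m) : lmap (0 : Fin j → EF K m) x = 0 := by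
  simp [lmap]

/-- Key kernel bound: a nonzero linearized polynomial with `j` terms has kernel
of dimension at most `j - 1`. -/
theorem finrank_ker_lmap_le {j : ℕ} {a : Fin j → EF K m} (ha : a ≠ 0) :
    Module.finrank K (LinearMap.ker (lmap a)) ≤ j - 1 := by
  classical
  haveI : Fintype (EF K m) := Fintype.ofFinite _
  have hq1 : 1 < Fintype.card K := Fintype.one_lt_card
  set q := Fintype.card K with hqdef
  have hj : 1 ≤ j := by
    rcases Nat.eq_zero_or_pos j with h0 | h1
    · exact absurd (_root_.funext fun i => (Fin.cast h0 i).elim0) ha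
    · exact h1
  obtain ⟨i0, hi0⟩ : ∃ i, a i ≠ 0 := by
    by_contra h
    push_neg at h
    exact ha (funext h)
  set P : (EF K m)[X] := ∑ i : Fin j, C (a i) * X ^ q ^ (i : ℕ) with hP
  have hPne : P ≠ 0 := by
    intro h
    apply hi0
    have hc := congrArg (fun Q : (EF K m)[X] => Q.coeff (q ^ (i0 : ℕ))) h
    simp only [hP, finset_sum_coeff, coeff_C_mul, coeff_X_pow, coeff_zero] at hc
    rw [Finset.sum_eq_single i0] at hc
    · simpa using hc
    · intro i _ hne
      have hcond : ¬ (q ^ (i0 : ℕ) = q ^ (i : ℕ)) := fun hq =>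
        hne (Fin.ext (Nat.pow_right_injective hq1 hq)).symm
      simp [hcond]
    · simp
  have hdeg : P.natDegree ≤ q ^ (j - 1) := by
    refine natDegree_sum_le_of_forall_le _ _ fun i _ => ?_
    refine le_trans (natDegree_C_mul_le _ _) ?_
    rw [natDegree_X_pow]
    exact Nat.pow_le_pow_right (by omega) (by omega)
  have hker_root : ∀ x : EF K m, x ∈ LinearMap.ker (lmap a) → x ∈ P.roots.toFinset := by
    intro x hx
    rw [Multiset.mem_toFinset, mem_roots hPne]
    have : P.eval x = lmap a x := by
      simp [hP, lmap, eval_finset_sum, hqdef]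
    rw [IsRoot.def, this]
    exact hx
  have hcard : Fintype.card (LinearMap.ker (lmap a)) ≤ q ^ (j - 1) := by
    have hinj : Function.Injective
        (fun x : LinearMap.ker (lmap a) => (⟨x.1, hker_root x.1 x.2⟩ : P.roots.toFinset)) := by
      intro x y hxy
      have hval := congrArg Subtype.val hxy
      exact Subtype.ext hval
    calc Fintype.card (LinearMap.ker (lmap a)) ≤ Fintype.card P.roots.toFinset :=
          Fintype.card_le_of_injective _ hinj
      _ = P.roots.toFinset.card := Fintype.card_coe _
      _ ≤ Multiset.card P.roots := Multiset.toFinset_card_le _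
      _ ≤ P.natDegree := P.card_roots'
      _ ≤ q ^ (j - 1) := hdeg
  by_contra hcon
  push_neg at hcon
  have hle : j ≤ Module.finrank K (LinearMap.ker (lmap a)) := by omega
  have : q ^ j ≤ Fintype.card (LinearMap.ker (lmap a)) := by
    rw [Module.card_eq_pow_finrank (K := K)]
    exact Nat.pow_le_pow_right (by omega) hle
  have : q ^ j ≤ q ^ (j - 1) := le_trans this hcard
  have := Nat.pow_lt_pow_right hq1 (show j - 1 < j by omega)
  omega

end Lin

end

end Stmt11Aux

open Stmt11Aux Matrix

/-- for 1 ≤ k ≤ m and a Delsarte code 𝒞 ⊆ Mat(k × m, F_q),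
dim_{F_q} 𝒞 ≤ m · maxrk 𝒞. -/
theorem stmt11 {K : Type*} [Field K] [Fintype K] {k m : ℕ}
    (hk : 1 ≤ k) (hkm : k ≤ m)
    (𝒞 : Submodule K (Matrix (Fin k) (Fin m) K)) :
    Module.finrank K 𝒞 ≤ m * dmaxrk 𝒞 := by
  classical
  have hq1 : 1 < Fintype.card K := Fintype.one_lt_card
  set q := Fintype.card K with hqdef
  have hm : m ≠ 0 := by omega
  set r := dmaxrk 𝒞 with hrdef
  have hbddset : ∀ n ∈ {r | ∃ M ∈ 𝒞, M.rank = r}, n ≤ k := by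
    rintro n ⟨M, _, rfl⟩
    exact M.rank_le_height
  have hbdd : BddAbove {r | ∃ M ∈ 𝒞, M.rank = r} := ⟨k, hbddset⟩
  have hrank_le : ∀ M ∈ 𝒞, M.rank ≤ r := fun M hM => le_csSup hbdd ⟨M, hM, rfl⟩
  have hrk : r ≤ k :=
    csSup_le ⟨0, 0, 𝒞.zero_mem, Matrix.rank_zero⟩ hbddset
  set j := k - r with hjdef
  set L := EF K m with hLdef
  haveI : Fintype L := Fintype.ofFinite _
  have hfr : Module.finrank K L = m := finrank_EF hm
  have hcardL : Fintype.card L = q ^ m := by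
    rw [Module.card_eq_pow_finrank (K := K) (V := L), hfr]
  let b : Module.Basis (Fin m) K L := Module.finBasisOfFinrankEq K L hfr
  let γ : Fin k → L := fun i => b (Fin.castLE hkm i)
  have hγli : LinearIndependent K γ :=
    b.linearIndependent.comp (Fin.castLE hkm) (Fin.castLE_injective hkm)
  -- the evaluation of coordinates map
  let g : (Fin k → K) →ₗ[K] L :=
    { toFun := fun x => ∑ i, x i • γ i
      map_add' := by
        intro x y
        simp_rw [Pi.add_apply, add_smul]
        rw [Finset.sum_add_distrib]
      map_smul' := by
        intro c x
        simp_rw [RingHom.id_apply, Pi.smul_apply, smul_eq_mul, Finset.smul_sum, smul_smul] }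
  have hginj : Function.Injective g := by
    rw [injective_iff_map_eq_zero]
    intro x hx
    have := Fintype.linearIndependent_iff.mp hγli x hx
    exact funext this
  -- the Gabidulin-type matrices
  let Ψ : (Fin j → L) → Matrix (Fin k) (Fin m) K :=
    fun a => Matrix.of fun i t => b.repr (lmap a (γ i)) t
  have hΨsub : ∀ a a' : Fin j → L, Ψ a - Ψ a' = Ψ (a - a') := by
    intro a a'
    ext i t
    simp only [Ψ, Matrix.sub_apply, Matrix.of_apply, lmap_sub, map_sub, Finsupp.sub_apply]
  have hΨzero : Ψ 0 = 0 := by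
    ext i t
    simp only [Ψ, Matrix.of_apply, lmap_zero_apply, map_zero, Finsupp.coe_zero, Pi.zero_apply,
      Matrix.zero_apply]
  -- rank bound
  have hΨrank : ∀ a : Fin j → L, a ≠ 0 → r + 1 ≤ (Ψ a).rank := by
    intro a ha
    have hj1 : 1 ≤ j := by
      rcases Nat.eq_zero_or_pos j with h0 | h1
      · exact absurd (_root_.funext fun i => (Fin.cast h0 i).elim0) ha
      · exact h1
    have hrk' : r < k := by omega
    -- identify the transpose action
    have hT : ((Ψ a)ᵀ).mulVecLin =
        (b.equivFun.toLinearMap.comp ((lmap a).comp g)) := by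
      apply LinearMap.ext
      intro x
      funext t
      have hg : g x = ∑ i, x i • γ i := rfl
      have h1 : lmap a (g x) = ∑ i, x i • lmap a (γ i) := by
        rw [hg, map_sum]
        exact Finset.sum_congr rfl fun i _ => (lmap a).map_smul (x i) (γ i)
      simp only [Matrix.mulVecLin_apply, LinearMap.coe_comp, LinearEquiv.coe_coe,
        Function.comp_apply]
      rw [Module.Basis.equivFun_apply, h1, map_sum, Finsupp.finset_sum_apply]
      simp only [LinearMapClass.map_smul, Finsupp.smul_apply, smul_eq_mul]
      simp [Matrix.mulVec, dotProduct, Ψ, mul_comm]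
    have hker : LinearMap.ker (b.equivFun.toLinearMap.comp ((lmap a).comp g)) =
        LinearMap.ker ((lmap a).comp g) := by
      rw [LinearMap.ker_comp]
      have : LinearMap.ker b.equivFun.toLinearMap = ⊥ := b.equivFun.ker
      rw [this, Submodule.comap_bot]
    have hkerle : Module.finrank K (LinearMap.ker ((lmap a).comp g)) ≤ j - 1 := by
      have hmap : Submodule.map g (LinearMap.ker ((lmap a).comp g)) ≤
          LinearMap.ker (lmap a) := by
        rintro y ⟨x, hx, rfl⟩
        simpa using hx
      calc Module.finrank K (LinearMap.ker ((lmap a).comp g))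
          = Module.finrank K (Submodule.map g (LinearMap.ker ((lmap a).comp g))) :=
            (Submodule.equivMapOfInjective g hginj _).finrank_eq
        _ ≤ Module.finrank K (LinearMap.ker (lmap a)) := Submodule.finrank_mono hmap
        _ ≤ j - 1 := finrank_ker_lmap_le ha
    have hrn := LinearMap.finrank_range_add_finrank_ker
      (b.equivFun.toLinearMap.comp ((lmap a).comp g))
    rw [hker, Module.finrank_fin_fun] at hrn
    have this2 : (Ψ a)ᵀ.rank = Module.finrank K
        (LinearMap.range (((Ψ a)ᵀ).mulVecLin)) := rfl
    have this3 : (Ψ a)ᵀ.rank = Module.finrank K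
        (LinearMap.range (b.equivFun.toLinearMap.comp ((lmap a).comp g))) := by
      rw [this2, hT]
    rw [← Matrix.rank_transpose, this3]
    omega
  -- injectivity of the code-anticode sum
  have hinj : Function.Injective
      (fun p : 𝒞 × (Fin j → L) => (p.1 : Matrix (Fin k) (Fin m) K) + Ψ p.2) := by
    rintro ⟨c₁, a₁⟩ ⟨c₂, a₂⟩ h
    simp only at h
    have hd : (c₁ : Matrix (Fin k) (Fin m) K) - (c₂ : Matrix (Fin k) (Fin m) K) =
        Ψ (a₂ - a₁) := by
      rw [← hΨsub]
      have : (c₁ : Matrix (Fin k) (Fin m) K) + Ψ a₁ - (Ψ a₁ + Ψ a₂) =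
          (c₂ : Matrix (Fin k) (Fin m) K) + Ψ a₂ - (Ψ a₁ + Ψ a₂) := by rw [h]
      calc (c₁ : Matrix (Fin k) (Fin m) K) - (c₂ : Matrix (Fin k) (Fin m) K)
          = ((c₁ : Matrix (Fin k) (Fin m) K) + Ψ a₁ - (Ψ a₁ + Ψ a₂))
            - ((c₂ : Matrix (Fin k) (Fin m) K) + Ψ a₂ - (Ψ a₁ + Ψ a₂))
            + (Ψ a₂ - Ψ a₁) := by abel
        _ = Ψ a₂ - Ψ a₁ := by rw [this]; abel
    by_cases haa : a₂ - a₁ = 0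
    · have ha : a₁ = a₂ := by
        have := sub_eq_zero.mp haa
        exact this.symm
      have hc : c₁ = c₂ := by
        apply Subtype.ext
        have : (c₁ : Matrix (Fin k) (Fin m) K) - (c₂ : Matrix (Fin k) (Fin m) K) = 0 := by
          rw [hd, haa, hΨzero]
        exact sub_eq_zero.mp this
      rw [hc, ha]
    · exfalso
      have hmem : Ψ (a₂ - a₁) ∈ 𝒞 := by
        rw [← hd]
        exact Submodule.sub_mem 𝒞 c₁.2 c₂.2
      have h1 := hrank_le _ hmem
      have h2 := hΨrank _ haa
      omega
  -- counting
  haveI : Fintype 𝒞 := Fintype.ofFinite _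
  have hcardle :
      Fintype.card (𝒞 × (Fin j → L)) ≤ Fintype.card (Matrix (Fin k) (Fin m) K) :=
    Fintype.card_le_of_injective _ hinj
  have hcard1 : Fintype.card (𝒞 × (Fin j → L)) =
      q ^ (Module.finrank K 𝒞) * q ^ (m * j) := by
    rw [Fintype.card_prod, Module.card_eq_pow_finrank (K := K) (V := 𝒞), Fintype.card_fun,
      hcardL, Fintype.card_fin, ← pow_mul]
  have hcard2 : Fintype.card (Matrix (Fin k) (Fin m) K) = q ^ (k * m) := by
    rw [Module.card_eq_pow_finrank (K := K) (V := Matrix (Fin k) (Fin m) K)]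
    congr 1
    rw [Module.finrank_matrix]
    simp
  rw [hcard1, hcard2, ← pow_add] at hcardle
  have hexp : Module.finrank K 𝒞 + m * j ≤ k * m :=
    (Nat.pow_le_pow_iff_right hq1).mp hcardle
  have hsplit : k = r + j := by omega
  have hkm' : k * m = r * m + j * m := by rw [hsplit]; ring
  have hmj : m * j = j * m := mul_comm m j
  have hfin : Module.finrank K 𝒞 ≤ r * m := by omega
  calc Module.finrank K 𝒞 ≤ r * m := hfin
    _ = m * r := mul_comm r m
end
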